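/- arXiv:0811.4281 — 4 statements merged into one kernel-verified Lean document; each statement's English description precedes it below -/
import Mathlib

section
/- In the convolution algebra 𝒜 on subsets of {1,…,n}, define D_{i} f(I) = f(I ∪ {i}) if i ∉ I and 0 otherwise. Then for any f ∈ 𝒜₀ (f(∅)=0), D_{i}(exp_𝒜 f) = (exp_𝒜 f) * (D_{i} f). -/
/-- Convolution product on the algebra of complex functions on subsets of `{1,…,n}`. -/
noncomputable def conv (n : ℕ) (f g : Finset (Fin n) → ℂ) : Finset (Fin n) → ℂ :=
  fun I => ∑ J ∈ I.powerset, f J * g (I \ J)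

/-- The unit of the convolution algebra: the indicator of the empty set. -/
def deltaA (n : ℕ) : Finset (Fin n) → ℂ := fun I => if I = ∅ then 1 else 0

/-- Convolution powers. -/
noncomputable def convPow (n : ℕ) (f : Finset (Fin n) → ℂ) : ℕ → (Finset (Fin n) → ℂ)
  | 0 => deltaA n
  | k + 1 => conv n f (convPow n f k)

/-- The exponential in the convolution algebra,
`exp_𝒜 f = 1_𝒜 + f + f^{*2}/2! + ⋯ + f^{*n}/n!`. -/
noncomputable def expA (n : ℕ) (f : Finset (Fin n) → ℂ) : Finset (Fin n) → ℂ :=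
  fun I => ∑ k ∈ Finset.range (n + 1), (Nat.factorial k : ℂ)⁻¹ * convPow n f k I

/-- The discrete derivative `D_i f(I) = f(I ∪ {i})` if `i ∉ I`, `0` otherwise. -/
noncomputable def Dd (n : ℕ) (i : Fin n) (f : Finset (Fin n) → ℂ) : Finset (Fin n) → ℂ :=
  fun I => if i ∈ I then 0 else f (insert i I)

lemma conv_comm (n : ℕ) (f g : Finset (Fin n) → ℂ) (I : Finset (Fin n)) :
    conv n f g I = conv n g f I := by
  unfold conv
  refine Finset.sum_nbij' (fun J => I \ J) (fun J => I \ J) ?_ ?_ ?_ ?_ ?_ <;>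
    simp only [Finset.mem_powerset] <;> intro J hJ
  · exact Finset.sdiff_subset
  · exact Finset.sdiff_subset
  · exact Finset.sdiff_sdiff_eq_self hJ
  · exact Finset.sdiff_sdiff_eq_self hJ
  · rw [Finset.sdiff_sdiff_eq_self hJ, mul_comm]

lemma conv_assoc (n : ℕ) (f g h : Finset (Fin n) → ℂ) (I : Finset (Fin n)) :
    conv n (conv n f g) h I = conv n f (conv n g h) I := by
  unfold conv
  simp only [Finset.sum_mul, Finset.mul_sum]
  rw [Finset.sum_sigma', Finset.sum_sigma']
  refine Finset.sum_nbij' (fun p => ⟨p.2, p.1 \ p.2⟩) (fun p => ⟨p.1 ∪ p.2, p.1⟩) ?_ ?_ ?_ ?_ ?_ <;>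
    rintro ⟨a, b⟩ hab <;>
    simp only [Finset.mem_sigma, Finset.mem_powerset] at hab ⊢
  · exact ⟨hab.2.trans hab.1, Finset.sdiff_subset_sdiff hab.1 le_rfl⟩
  · exact ⟨Finset.union_subset hab.1 (hab.2.trans Finset.sdiff_subset), Finset.subset_union_left⟩
  · simp [Finset.union_sdiff_cancel_left, Finset.union_eq_right.mpr hab.2, Finset.union_comm,
      Finset.sdiff_union_of_subset hab.2]
  · have hd : Disjoint a b := Disjoint.mono_right hab.2 Finset.disjoint_sdiff
    simp [Finset.union_sdiff_cancel_left hd]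
  · have : (I \ b) \ (a \ b) = I \ a := by
      ext x; simp only [Finset.mem_sdiff]; tauto
    rw [this, mul_assoc]

lemma delta_conv (n : ℕ) (g : Finset (Fin n) → ℂ) (I : Finset (Fin n)) :
    conv n (deltaA n) g I = g I := by
  unfold conv deltaA
  rw [Finset.sum_eq_single ∅]
  · simp
  · intro J hJ hne; simp [hne]
  · intro h; simp at h

lemma convPow_vanish (n : ℕ) (f : Finset (Fin n) → ℂ) (hf : f ∅ = 0) :
    ∀ k I, I.card < k → convPow n f k I = 0 := by
  intro k
  induction k with
  | zero => intro I h; omega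
  | succ k ih =>
    intro I h
    show conv n f (convPow n f k) I = 0
    unfold conv
    apply Finset.sum_eq_zero
    intro J hJ
    rw [Finset.mem_powerset] at hJ
    rcases eq_or_ne J ∅ with rfl | hne
    · simp [hf]
    · have hc : (I \ J).card < k := by
        have h1 : J.Nonempty := Finset.nonempty_iff_ne_empty.mpr hne
        have := Finset.card_sdiff_of_subset hJ
        have hJc : 1 ≤ J.card := Finset.card_pos.mpr h1
        have := Finset.card_le_card hJ
        omega
      rw [ih _ hc, mul_zero]

lemma Dd_conv (n : ℕ) (i : Fin n) (f g : Finset (Fin n) → ℂ) (I : Finset (Fin n)) (hi : i ∉ I) :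
    Dd n i (conv n f g) I = conv n (Dd n i f) g I + conv n f (Dd n i g) I := by
  unfold Dd conv
  rw [if_neg hi, Finset.sum_powerset_insert hi]
  rw [add_comm]
  congr 1
  · apply Finset.sum_congr rfl
    intro J hJ
    rw [Finset.mem_powerset] at hJ
    have hiJ : i ∉ J := fun h => hi (hJ h)
    simp only [if_neg hiJ]
    have hs : insert i I \ insert i J = I \ J := by
      ext x; simp only [Finset.mem_sdiff, Finset.mem_insert]
      by_cases hx : x = i
      · subst hx; simp [hi, hiJ]
      · simp [hx]
    rw [hs]
  · apply Finset.sum_congr rfl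
    intro J hJ
    rw [Finset.mem_powerset] at hJ
    have hiJ : i ∉ J := fun h => hi (hJ h)
    have hIJ : i ∉ I \ J := fun h => hi (Finset.mem_sdiff.mp h).1
    simp only [if_neg hIJ]
    have hs : insert i I \ J = insert i (I \ J) := by
      ext x; simp only [Finset.mem_sdiff, Finset.mem_insert]
      by_cases hx : x = i
      · subst hx; simp [hi, hiJ]
      · simp [hx]
    rw [hs]

lemma conv_delta (n : ℕ) (g : Finset (Fin n) → ℂ) (I : Finset (Fin n)) :
    conv n g (deltaA n) I = g I := by
  rw [conv_comm]; exact delta_conv n g I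

lemma Dd_convPow (n : ℕ) (i : Fin n) (f : Finset (Fin n) → ℂ) :
    ∀ k (I : Finset (Fin n)), i ∉ I →
      Dd n i (convPow n f (k + 1)) I = ((k : ℂ) + 1) * conv n (convPow n f k) (Dd n i f) I := by
  intro k
  induction k with
  | zero =>
    intro I hi
    show Dd n i (conv n f (deltaA n)) I = _
    rw [Dd_conv n i f (deltaA n) I hi]
    have h2 : conv n f (Dd n i (deltaA n)) I = 0 := by
      apply Finset.sum_eq_zero
      intro J hJ
      have : Dd n i (deltaA n) (I \ J) = 0 := by
        unfold Dd deltaA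
        by_cases h : i ∈ I \ J <;> simp [h, Finset.insert_ne_empty]
      rw [this, mul_zero]
    rw [h2, add_zero, conv_delta]
    rw [show convPow n f 0 = deltaA n from rfl, delta_conv]
    norm_num
  | succ k ih =>
    intro I hi
    show Dd n i (conv n f (convPow n f (k + 1))) I = _
    rw [Dd_conv n i f _ I hi]
    have h2 : conv n f (Dd n i (convPow n f (k + 1))) I
        = ((k : ℂ) + 1) * conv n f (conv n (convPow n f k) (Dd n i f)) I := by
      show (∑ J ∈ I.powerset, f J * Dd n i (convPow n f (k + 1)) (I \ J)) = ((k : ℂ) + 1) *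
        ∑ J ∈ I.powerset, f J * conv n (convPow n f k) (Dd n i f) (I \ J)
      rw [Finset.mul_sum]
      apply Finset.sum_congr rfl
      intro J hJ
      rw [Finset.mem_powerset] at hJ
      have hIJ : i ∉ I \ J := fun h => hi (Finset.mem_sdiff.mp h).1
      rw [ih (I \ J) hIJ]
      ring
    rw [h2, conv_comm n (Dd n i f) _ I, ← conv_assoc]
    rw [show convPow n f (k + 1) = conv n f (convPow n f k) from rfl]
    push_cast
    ring

/-- for `f ∈ 𝒜₀`, `D_i (exp_𝒜 f) = (exp_𝒜 f) * (D_i f)`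
(an identity between the values on sets not containing `i`, the only sets on
which `D_i` carries information). -/
theorem D_expA (n : ℕ) (i : Fin n) (f : Finset (Fin n) → ℂ) (hf : f ∅ = 0) :
    ∀ I : Finset (Fin n), i ∉ I →
      Dd n i (expA n f) I = conv n (expA n f) (Dd n i f) I := by
  intro I hi
  have hL : Dd n i (expA n f) I
      = ∑ k ∈ Finset.range (n + 1), (Nat.factorial k : ℂ)⁻¹ * Dd n i (convPow n f k) I := by
    unfold Dd expA
    rw [if_neg hi]
    apply Finset.sum_congr rfl
    intro k _
    rw [if_neg hi]
  have hR : conv n (expA n f) (Dd n i f) I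
      = ∑ k ∈ Finset.range (n + 1), (Nat.factorial k : ℂ)⁻¹ * conv n (convPow n f k) (Dd n i f) I := by
    unfold conv expA
    simp only [Finset.sum_mul]
    rw [Finset.sum_comm]
    apply Finset.sum_congr rfl
    intro k _
    rw [Finset.mul_sum]
    apply Finset.sum_congr rfl
    intro J _
    ring
  rw [hL, hR]
  have hcard : I.card < n := by
    have h1 : I ⊆ Finset.univ.erase i := fun x hx =>
      Finset.mem_erase.mpr ⟨fun h => hi (h ▸ hx), Finset.mem_univ x⟩
    have h2 := Finset.card_le_card h1
    rw [Finset.card_erase_of_mem (Finset.mem_univ i), Finset.card_univ, Fintype.card_fin] at h2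
    have : 0 < n := i.pos
    omega
  have hlast : conv n (convPow n f n) (Dd n i f) I = 0 := by
    apply Finset.sum_eq_zero
    intro J hJ
    rw [Finset.mem_powerset] at hJ
    have : J.card < n := lt_of_le_of_lt (Finset.card_le_card hJ) hcard
    rw [convPow_vanish n f hf n J this, zero_mul]
  conv_rhs => rw [Finset.sum_range_succ]
  rw [hlast, mul_zero, add_zero]
  conv_lhs => rw [Finset.sum_range_succ']
  have h0 : Dd n i (convPow n f 0) I = 0 := by
    unfold Dd
    rw [if_neg hi]
    show deltaA n (insert i I) = 0
    simp [deltaA, Finset.insert_ne_empty]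
  rw [h0, mul_zero, add_zero]
  apply Finset.sum_congr rfl
  intro k _
  rw [Dd_convPow n i f k I hi, Nat.factorial_succ]
  have ha : ((k : ℂ) + 1) ≠ 0 := Nat.cast_add_one_ne_zero k
  have hb : ((Nat.factorial k : ℂ)) ≠ 0 := Nat.cast_ne_zero.mpr (Nat.factorial_ne_zero k)
  push_cast
  field_simp
end

section
/- Fix nonnegative reals b_i and numbers |ζ_{ij}| ≥ 0, and a choice function ι on nonempty subsets of {1,…,n}. The recursion h(∅,J) = δ_{∅,J}, and for I ≠ ∅, h(I,J) = e^{2b_{ι(I)}} Σ_{K⊆J} (∏_{i∈K} |ζ_{i,ι(I)}|) h(I'∪K, J∖K) with I' = I∖{ι(I)}, has unique solution h(I,J) = (∏_{i∈I∪J} e^{2b_i}) · Σ_{G ∈ 𝓕_I(J)} ∏_{{i,j}∈G} |ζ_{ij}|, where 𝓕_I(J) is the set of forests on I∪J in which each tree contains exactly one element of I. -/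
/-- Ordered pairs `(i,j)` with `i < j` and both endpoints in `I`: the possible
edges of a simple graph on vertex set `I ⊆ Fin n`. -/
def edgesOn (n : ℕ) (I : Finset (Fin n)) : Finset (Fin n × Fin n) :=
  Finset.univ.filter fun p => p.1 < p.2 ∧ p.1 ∈ I ∧ p.2 ∈ I

/-- Simple graphs on vertex set `I`, identified with their edge sets. -/
def graphsOn (n : ℕ) (I : Finset (Fin n)) : Finset (Finset (Fin n × Fin n)) :=
  (edgesOn n I).powerset

/-- Adjacency relation of an edge set. -/
def adjE {n : ℕ} (G : Finset (Fin n × Fin n)) (i j : Fin n) : Prop :=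
  (i, j) ∈ G ∨ (j, i) ∈ G

/-- The edge set `G` makes the (nonempty) vertex set `I` connected. -/
def ConnOn {n : ℕ} (I : Finset (Fin n)) (G : Finset (Fin n × Fin n)) : Prop :=
  I.Nonempty ∧ ∀ i ∈ I, ∀ j ∈ I, Relation.ReflTransGen (adjE G) i j

open Classical in
/-- Connected graphs on the vertex set `I`. -/
noncomputable def connGraphsOn (n : ℕ) (I : Finset (Fin n)) :
    Finset (Finset (Fin n × Fin n)) :=
  (graphsOn n I).filter (ConnOn I)

open Classical in
/-- Trees on the `n` labeled vertices `{1,…,n}`: connected graphs with `n-1` edges. -/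
noncomputable def treesOn (n : ℕ) : Finset (Finset (Fin n × Fin n)) :=
  (connGraphsOn n Finset.univ).filter fun G => G.card = n - 1

open Classical in
/-- Forests on `I ∪ J` rooted in `I`: cycle-free graphs on `I ∪ J` each of whose
connected components contains exactly one vertex of `I`.  Equivalently (as used
here), graphs on `I ∪ J` with exactly `|J|` edges such that every vertex of
`I ∪ J` is connected to exactly one element of `I`. -/
noncomputable def forestsOn (n : ℕ) (I J : Finset (Fin n)) :
    Finset (Finset (Fin n × Fin n)) :=
  (graphsOn n (I ∪ J)).filter fun G =>
    G.card = J.card ∧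
    ∀ v ∈ I ∪ J, ∃! i : Fin n, i ∈ I ∧ Relation.ReflTransGen (adjE G) v i

open Relation Finset

section Aux
variable {n : ℕ}

lemma adjE_symm {G : Finset (Fin n × Fin n)} : Symmetric (adjE G) :=
  fun _ _ h => Or.symm h

lemma reach_symm {G : Finset (Fin n × Fin n)} {a b : Fin n}
    (h : ReflTransGen (adjE G) a b) : ReflTransGen (adjE G) b a :=
  by haveI : Std.Symm (adjE G) := ⟨fun _ _ h => adjE_symm h⟩; exact (ReflTransGen.symmetric (r := adjE G)).symm _ _ h

/-- `reachIn G R m v`: from `v` one can reach `R` in at most `m` steps. -/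
def reachIn (G : Finset (Fin n × Fin n)) (R : Finset (Fin n)) : ℕ → Fin n → Prop
  | 0, v => v ∈ R
  | (m+1), v => reachIn G R m v ∨ ∃ w, adjE G v w ∧ reachIn G R m w

lemma reachIn_of_reach {G : Finset (Fin n × Fin n)} {R : Finset (Fin n)} {v r : Fin n}
    (hr : r ∈ R) (h : ReflTransGen (adjE G) v r) : ∃ m, reachIn G R m v := by
  induction h using ReflTransGen.head_induction_on with
  | refl => exact ⟨0, hr⟩
  | head hadj _ ih =>
      obtain ⟨m, hm⟩ := ih
      exact ⟨m + 1, Or.inr ⟨_, hadj, hm⟩⟩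

lemma card_le_of_reach (G : Finset (Fin n × Fin n)) (V R : Finset (Fin n))
    (hreach : ∀ v ∈ V, ∃ r ∈ R, Relation.ReflTransGen (adjE G) v r) :
    V.card ≤ G.card + R.card := by
  classical
  set d : Fin n → ℕ := fun v => if hv : ∃ m, reachIn G R m v then Nat.find hv else 0 with hd
  have key : ∀ v, (∃ m, reachIn G R m v) → v ∉ R →
      ∃ w, ((v, w) ∈ G ∨ (w, v) ∈ G) ∧ d w < d v := by
    intro v hv hvR
    have h1 : reachIn G R (Nat.find hv) v := Nat.find_spec hv
    cases hm : Nat.find hv with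
    | zero => rw [hm] at h1; exact absurd h1 hvR
    | succ m =>
      rw [hm] at h1
      rcases h1 with h1 | ⟨w, hw, hwm⟩
      · exact absurd h1 (Nat.find_min hv (by omega))
      · refine ⟨w, hw, ?_⟩
        have hw' : ∃ m, reachIn G R m w := ⟨m, hwm⟩
        have h2 : d w ≤ m := by
          simp only [hd]; rw [dif_pos hw']; exact Nat.find_min' hw' hwm
        have h3 : d v = m + 1 := by simp only [hd]; rw [dif_pos hv, hm]
        omega
  have hex : ∀ v : Fin n, ∃ e : Fin n × Fin n, v ∈ V \ R →
      e ∈ G ∧ ((e.1 = v ∧ d e.2 < d v) ∨ (e.2 = v ∧ d e.1 < d v)) := by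
    intro v
    by_cases hv : v ∈ V \ R
    · rw [mem_sdiff] at hv
      obtain ⟨r, hr, hvr⟩ := hreach v hv.1
      obtain ⟨w, hwG, hdw⟩ := key v (reachIn_of_reach hr hvr) hv.2
      rcases hwG with hG | hG
      · exact ⟨(v, w), fun _ => ⟨hG, Or.inl ⟨rfl, hdw⟩⟩⟩
      · exact ⟨(w, v), fun _ => ⟨hG, Or.inr ⟨rfl, hdw⟩⟩⟩
    · exact ⟨(v, v), fun h => absurd h hv⟩
  choose φ hφ using hex
  have hcard : (V \ R).card ≤ G.card := by
    apply Finset.card_le_card_of_injOn φ (fun v hv => (hφ v hv).1)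
    intro v hv v' hv' heq
    obtain ⟨_, h1⟩ := hφ v hv
    obtain ⟨_, h2⟩ := hφ v' hv'
    rw [heq] at h1
    rcases h1 with ⟨e1, d1⟩ | ⟨e1, d1⟩ <;> rcases h2 with ⟨e2, d2⟩ | ⟨e2, d2⟩ <;>
      first
        | (rw [← e1]; exact e2)
        | (rw [e1] at d2; rw [e2] at d1; omega)
  have := Finset.card_le_card_sdiff_add_card (s := V) (t := R)
  omega

lemma unique_root_of_card (G : Finset (Fin n × Fin n)) (V R : Finset (Fin n))
    (hcard : G.card + R.card ≤ V.card)
    (hreach : ∀ v ∈ V, ∃ r ∈ R, Relation.ReflTransGen (adjE G) v r) :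
    ∀ v, ∀ r₁ ∈ R, ∀ r₂ ∈ R, Relation.ReflTransGen (adjE G) v r₁ →
      Relation.ReflTransGen (adjE G) v r₂ → r₁ = r₂ := by
  intro v r₁ hr₁ r₂ hr₂ h₁ h₂
  by_contra hne
  have hreach' : ∀ w ∈ V, ∃ r ∈ R.erase r₂, Relation.ReflTransGen (adjE G) w r := by
    intro w hw
    obtain ⟨r, hr, hwr⟩ := hreach w hw
    by_cases hrr : r = r₂
    · exact ⟨r₁, Finset.mem_erase.2 ⟨hne, hr₁⟩, hwr.trans ((hrr ▸ (reach_symm h₂)).trans h₁)⟩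
    · exact ⟨r, Finset.mem_erase.2 ⟨hrr, hr⟩, hwr⟩
  have h3 := card_le_of_reach G V (R.erase r₂) hreach'
  have h4 : (R.erase r₂).card = R.card - 1 := Finset.card_erase_of_mem hr₂
  have h5 : 1 ≤ R.card := Finset.card_pos.2 ⟨r₂, hr₂⟩
  omega

end Aux

section Aux2
variable {n : ℕ}

lemma mem_edgesOn {V : Finset (Fin n)} {p : Fin n × Fin n} :
    p ∈ edgesOn n V ↔ p.1 < p.2 ∧ p.1 ∈ V ∧ p.2 ∈ V := by
  simp [edgesOn]

lemma mem_forestsOn {I J : Finset (Fin n)} {G : Finset (Fin n × Fin n)} :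
    G ∈ forestsOn n I J ↔ G ⊆ edgesOn n (I ∪ J) ∧ G.card = J.card ∧
      ∀ v ∈ I ∪ J, ∃! i : Fin n, i ∈ I ∧ Relation.ReflTransGen (adjE G) v i := by
  simp [forestsOn, graphsOn, Finset.mem_filter, Finset.mem_powerset, and_assoc]

/-- The "star" edges joining each element of `K` to `i₀`. -/
def starE (K : Finset (Fin n)) (i₀ : Fin n) : Finset (Fin n × Fin n) :=
  K.image fun k => if k < i₀ then (k, i₀) else (i₀, k)

lemma starE_injOn {K : Finset (Fin n)} {i₀ : Fin n} :
    Set.InjOn (fun k => if k < i₀ then (k, i₀) else (i₀, k)) K := by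
  intro k _ k' _ heq
  dsimp only at heq
  split_ifs at heq with h1 h2 h2 <;> simp only [Prod.mk.injEq] at heq
  · exact heq.1
  · exact absurd (heq.1 ▸ h1) (lt_irrefl i₀)
  · exact absurd (heq.1.symm ▸ h2) (lt_irrefl i₀)
  · exact heq.2

lemma card_starE {K : Finset (Fin n)} {i₀ : Fin n} : (starE K i₀).card = K.card :=
  Finset.card_image_of_injOn starE_injOn

lemma adjE_starE {K : Finset (Fin n)} {i₀ : Fin n} {c b : Fin n} :
    adjE (starE K i₀) c b ↔ (c = i₀ ∧ b ∈ K) ∨ (b = i₀ ∧ c ∈ K) := by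
  constructor
  · rintro (hm | hm) <;> simp only [starE, Finset.mem_image] at hm <;>
      obtain ⟨k, hk, hke⟩ := hm <;> split_ifs at hke <;>
      simp only [Prod.mk.injEq] at hke
    · exact Or.inr ⟨hke.2.symm, hke.1 ▸ hk⟩
    · exact Or.inl ⟨hke.1.symm, hke.2 ▸ hk⟩
    · exact Or.inl ⟨hke.2.symm, hke.1 ▸ hk⟩
    · exact Or.inr ⟨hke.1.symm, hke.2 ▸ hk⟩
  · rintro (⟨rfl, hb⟩ | ⟨rfl, hc⟩)
    · by_cases hlt : b < c
      · exact Or.inr (Finset.mem_image.2 ⟨b, hb, by rw [if_pos hlt]⟩)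
      · exact Or.inl (Finset.mem_image.2 ⟨b, hb, by rw [if_neg hlt]⟩)
    · by_cases hlt : c < b
      · exact Or.inl (Finset.mem_image.2 ⟨c, hc, by rw [if_pos hlt]⟩)
      · exact Or.inr (Finset.mem_image.2 ⟨c, hc, by rw [if_neg hlt]⟩)

lemma starE_subset_edgesOn {K V : Finset (Fin n)} {i₀ : Fin n} (hi₀ : i₀ ∈ V)
    (hKV : K ⊆ V) (hK : i₀ ∉ K) : starE K i₀ ⊆ edgesOn n V := by
  intro p hp
  simp only [starE, Finset.mem_image] at hp
  obtain ⟨k, hk, hke⟩ := hp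
  have hki : k ≠ i₀ := fun hh => hK (hh ▸ hk)
  rw [mem_edgesOn]
  split_ifs at hke with h
  · rw [← hke]; exact ⟨h, hKV hk, hi₀⟩
  · rw [← hke]; exact ⟨lt_of_le_of_ne (not_lt.1 h) (Ne.symm hki), hi₀, hKV hk⟩

lemma prod_starE (z : Fin n → Fin n → ℝ) (hzsym : ∀ i j, z i j = z j i)
    {K : Finset (Fin n)} {i₀ : Fin n} :
    ∏ p ∈ starE K i₀, z p.1 p.2 = ∏ k ∈ K, z k i₀ := by
  rw [starE, Finset.prod_image starE_injOn]
  refine Finset.prod_congr rfl fun k _ => ?_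
  split_ifs <;> simp [hzsym i₀ k]

lemma reach_eq_of_avoid {G' : Finset (Fin n × Fin n)} {i₀ : Fin n}
    (hG' : ∀ p ∈ G', p.1 ≠ i₀ ∧ p.2 ≠ i₀) {a : Fin n}
    (h : Relation.ReflTransGen (adjE G') a i₀) : a = i₀ := by
  rcases h.cases_tail with heq | ⟨c, _, hcb⟩
  · exact heq.symm
  · rcases hcb with hm | hm
    exacts [absurd rfl (hG' _ hm).2, absurd rfl (hG' _ hm).1]

lemma decomp {G' : Finset (Fin n × Fin n)} {K : Finset (Fin n)} {i₀ : Fin n}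
    (hG' : ∀ p ∈ G', p.1 ≠ i₀ ∧ p.2 ≠ i₀) {a b : Fin n}
    (h : Relation.ReflTransGen (adjE (G' ∪ starE K i₀)) a b) :
    Relation.ReflTransGen (adjE G') a b ∨
      ((a = i₀ ∨ ∃ k ∈ K, Relation.ReflTransGen (adjE G') a k) ∧
       (b = i₀ ∨ ∃ k ∈ K, Relation.ReflTransGen (adjE G') b k)) := by
  induction h with
  | refl => exact Or.inl Relation.ReflTransGen.refl
  | @tail c b hac hcb ih =>
    have hsplit : adjE G' c b ∨ adjE (starE K i₀) c b := by
      rcases hcb with hm | hm <;> rw [Finset.mem_union] at hm <;>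
        rcases hm with hm | hm
      exacts [Or.inl (Or.inl hm), Or.inr (Or.inl hm),
        Or.inl (Or.inr hm), Or.inr (Or.inr hm)]
    rcases hsplit with hcb' | hcbS
    · rcases ih with ih | ⟨ha, hc⟩
      · exact Or.inl (ih.tail hcb')
      · refine Or.inr ⟨ha, ?_⟩
        rcases hc with rfl | ⟨k, hk, hck⟩
        · rcases hcb' with hm | hm
          exacts [absurd rfl (hG' _ hm).1, absurd rfl (hG' _ hm).2]
        · exact Or.inr ⟨k, hk, Relation.ReflTransGen.head (adjE_symm hcb') hck⟩
    · rcases adjE_starE.1 hcbS with ⟨rfl, hb⟩ | ⟨rfl, hc⟩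
      · refine Or.inr ⟨?_, Or.inr ⟨b, hb, Relation.ReflTransGen.refl⟩⟩
        rcases ih with ih | ⟨ha, _⟩
        · exact Or.inl (reach_eq_of_avoid hG' ih)
        · exact ha
      · refine Or.inr ⟨?_, Or.inl rfl⟩
        rcases ih with ih | ⟨ha, _⟩
        · exact Or.inr ⟨c, hc, ih⟩
        · exact ha

end Aux2

section Aux3
variable {n : ℕ}

open Relation Finset

lemma adjE_mono {G H : Finset (Fin n × Fin n)} (hs : G ⊆ H) {x y : Fin n}
    (hxy : adjE G x y) : adjE H x y := hxy.imp (@hs _) (@hs _)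

lemma reach_mono {G H : Finset (Fin n × Fin n)} (hs : G ⊆ H) {x y : Fin n}
    (hxy : ReflTransGen (adjE G) x y) : ReflTransGen (adjE H) x y :=
  ReflTransGen.mono (fun _ _ => adjE_mono hs) _ _ hxy

lemma edgesOn_mono {V W : Finset (Fin n)} (h : V ⊆ W) : edgesOn n V ⊆ edgesOn n W := by
  intro p hp
  rw [mem_edgesOn] at hp ⊢
  exact ⟨hp.1, h hp.2.1, h hp.2.2⟩

lemma union_erase {I J K : Finset (Fin n)} {i₀ : Fin n} (hd : Disjoint I J)
    (hi₀ : i₀ ∈ I) (hKJ : K ⊆ J) :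
    (I.erase i₀ ∪ K) ∪ (J \ K) = (I ∪ J).erase i₀ := by
  have hij : ∀ v, v ∈ J → v ≠ i₀ := fun v hv hh =>
    Finset.disjoint_left.1 hd hi₀ (hh ▸ hv)
  ext v
  simp only [Finset.mem_union, Finset.mem_erase, Finset.mem_sdiff]
  have h1 : v ∈ K → v ∈ J := fun hh => hKJ hh
  have h2 : v ∈ J → v ≠ i₀ := hij v
  tauto

lemma backward {I J K : Finset (Fin n)} (hd : Disjoint I J) {i₀ : Fin n} (hi₀ : i₀ ∈ I)
    (hKJ : K ⊆ J) {G' : Finset (Fin n × Fin n)}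
    (hG' : G' ∈ forestsOn n (I.erase i₀ ∪ K) (J \ K)) :
    G' ∪ starE K i₀ ∈ forestsOn n I J := by
  have hi₀J : i₀ ∉ J := Finset.disjoint_left.1 hd hi₀
  have hi₀K : i₀ ∉ K := fun h => hi₀J (hKJ h)
  have hV' : (I.erase i₀ ∪ K) ∪ (J \ K) = (I ∪ J).erase i₀ := union_erase hd hi₀ hKJ
  rw [mem_forestsOn, hV'] at hG'
  obtain ⟨hsub', hcard', huniq'⟩ := hG'
  have havoid : ∀ p ∈ G', p.1 ≠ i₀ ∧ p.2 ≠ i₀ := by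
    intro p hp
    have h1 := mem_edgesOn.1 (hsub' hp)
    exact ⟨(Finset.mem_erase.1 h1.2.1).1, (Finset.mem_erase.1 h1.2.2).1⟩
  have hGsub : G' ⊆ G' ∪ starE K i₀ := Finset.subset_union_left
  have hstep : ∀ k ∈ K, ReflTransGen (adjE (G' ∪ starE K i₀)) k i₀ := fun k hk =>
    ReflTransGen.single (adjE_mono Finset.subset_union_right (adjE_starE.2 (Or.inr ⟨rfl, hk⟩)))
  have hIK : ∀ i ∈ I.erase i₀, ∀ k ∈ K, ReflTransGen (adjE G') i k → False := by
    intro i hiI k hk hik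
    have hiV : i ∈ (I ∪ J).erase i₀ := by
      rw [Finset.mem_erase] at hiI ⊢
      exact ⟨hiI.1, Finset.mem_union_left _ hiI.2⟩
    have heq : i = k := (huniq' i hiV).unique
      ⟨Finset.mem_union_left _ hiI, ReflTransGen.refl⟩
      ⟨Finset.mem_union_right _ hk, hik⟩
    exact hi₀J (by exact absurd (hKJ (heq ▸ hk)) (Finset.disjoint_left.1 hd ((Finset.mem_erase.1 hiI).2)))
  have hU1 : ∀ i ∈ I, ReflTransGen (adjE (G' ∪ starE K i₀)) i₀ i → i = i₀ := by
    intro i hiI h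
    rcases decomp havoid h with h1 | ⟨_, hti⟩
    · exact reach_eq_of_avoid havoid (reach_symm h1)
    · rcases hti with rfl | ⟨k, hk, hik⟩
      · rfl
      · by_cases hii : i = i₀
        · exact hii
        · exact absurd (hIK i (Finset.mem_erase.2 ⟨hii, hiI⟩) k hk hik) id
  have hU2 : ∀ v ∈ (I ∪ J).erase i₀, ∀ i ∈ I,
      ReflTransGen (adjE (G' ∪ starE K i₀)) v i →
      (i = i₀ ∧ ∃ k ∈ K, ReflTransGen (adjE G') v k) ∨
      (i ≠ i₀ ∧ ReflTransGen (adjE G') v i) := by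
    intro v hv i hiI h
    have hvne : v ≠ i₀ := (Finset.mem_erase.1 hv).1
    rcases decomp havoid h with h1 | ⟨htv, hti⟩
    · by_cases hii : i = i₀
      · exact absurd (reach_eq_of_avoid havoid (hii ▸ h1)) hvne
      · exact Or.inr ⟨hii, h1⟩
    · rcases htv with rfl | ⟨k, hk, hvk⟩
      · exact absurd rfl hvne
      · rcases hti with rfl | ⟨k', hk', hik'⟩
        · exact Or.inl ⟨rfl, k, hk, hvk⟩
        · by_cases hii : i = i₀
          · exact Or.inl ⟨hii, k, hk, hvk⟩
          · exact absurd (hIK i (Finset.mem_erase.2 ⟨hii, hiI⟩) k' hk' hik') id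
  rw [mem_forestsOn]
  refine ⟨?_, ?_, ?_⟩
  · intro p hp
    rcases Finset.mem_union.1 hp with hp | hp
    · exact edgesOn_mono (Finset.erase_subset _ _) (hsub' hp)
    · exact starE_subset_edgesOn (Finset.mem_union_left _ hi₀)
        (fun k hk => Finset.mem_union_right _ (hKJ hk)) hi₀K hp
  · have hdisj : Disjoint G' (starE K i₀) := by
      rw [Finset.disjoint_left]
      intro p hp hp'
      rcases adjE_starE.1 (Or.inl (show (p.1, p.2) ∈ starE K i₀ from hp')) with ⟨h1, _⟩ | ⟨h1, _⟩
      · exact (havoid p hp).1 h1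
      · exact (havoid p hp).2 h1
    rw [Finset.card_union_of_disjoint hdisj, card_starE, hcard', Finset.card_sdiff_of_subset hKJ]
    have := Finset.card_le_card hKJ
    omega
  · intro v hv
    by_cases hvi : v = i₀
    · subst hvi
      exact ⟨v, ⟨hi₀, ReflTransGen.refl⟩, fun y hy => hU1 y hy.1 hy.2⟩
    · have hv' : v ∈ (I ∪ J).erase i₀ := Finset.mem_erase.2 ⟨hvi, hv⟩
      obtain ⟨r, ⟨hrR, hvr⟩, _⟩ := huniq' v hv'
      rcases Finset.mem_union.1 hrR with hrI | hrK
      · refine ⟨r, ⟨(Finset.mem_erase.1 hrI).2, reach_mono hGsub hvr⟩, ?_⟩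
        intro y ⟨hyI, hvy⟩
        rcases hU2 v hv' y hyI hvy with ⟨rfl, k, hk, hvk⟩ | ⟨_, hvy'⟩
        · have heq : k = r := (huniq' v hv').unique
            ⟨Finset.mem_union_right _ hk, hvk⟩ ⟨hrR, hvr⟩
          exact absurd (hKJ (heq ▸ hk))
            (Finset.disjoint_left.1 hd ((Finset.mem_erase.1 hrI).2))
        · exact (huniq' v hv').unique
            ⟨Finset.mem_union_left _ (Finset.mem_erase.2 ⟨(by assumption), hyI⟩), hvy'⟩ ⟨hrR, hvr⟩
      · refine ⟨i₀, ⟨hi₀, (reach_mono hGsub hvr).trans (hstep r hrK)⟩, ?_⟩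
        intro y ⟨hyI, hvy⟩
        rcases hU2 v hv' y hyI hvy with ⟨rfl, _⟩ | ⟨hyne2, hvy'⟩
        · rfl
        · have heq : y = r := (huniq' v hv').unique
            ⟨Finset.mem_union_left _ (Finset.mem_erase.2 ⟨hyne2, hyI⟩), hvy'⟩ ⟨hrR, hvr⟩
          exact absurd (hKJ (heq ▸ hrK)) (Finset.disjoint_left.1 hd hyI)
end Aux3

section Aux4
variable {n : ℕ}

open Relation Finset

open Classical in
/-- Neighbours of `i₀` inside `J`. -/
noncomputable def nbrs (G : Finset (Fin n × Fin n)) (J : Finset (Fin n)) (i₀ : Fin n) :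
    Finset (Fin n) :=
  J.filter fun j => adjE G j i₀

/-- The graph `G` with all edges touching `i₀` removed. -/
def prune (G : Finset (Fin n × Fin n)) (i₀ : Fin n) : Finset (Fin n × Fin n) :=
  G.filter fun p => p.1 ≠ i₀ ∧ p.2 ≠ i₀

lemma prune_avoid {G : Finset (Fin n × Fin n)} {i₀ : Fin n} :
    ∀ p ∈ prune G i₀, p.1 ≠ i₀ ∧ p.2 ≠ i₀ := fun p hp => (Finset.mem_filter.1 hp).2

lemma forward {I J : Finset (Fin n)} (hd : Disjoint I J) {i₀ : Fin n} (hi₀ : i₀ ∈ I)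
    {G : Finset (Fin n × Fin n)} (hG : G ∈ forestsOn n I J) :
    G = prune G i₀ ∪ starE (nbrs G J i₀) i₀ ∧
    prune G i₀ ∈ forestsOn n (I.erase i₀ ∪ nbrs G J i₀) (J \ nbrs G J i₀) := by
  classical
  have hi₀J : i₀ ∉ J := Finset.disjoint_left.1 hd hi₀
  set N := nbrs G J i₀ with hN
  have hNJ : N ⊆ J := Finset.filter_subset _ _
  have hi₀N : i₀ ∉ N := fun h => hi₀J (hNJ h)
  rw [mem_forestsOn] at hG
  obtain ⟨hsub, hcard, huniq⟩ := hG
  have hroot : ∀ i ∈ I, ReflTransGen (adjE G) i₀ i → i = i₀ := fun i hiI h =>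
    (huniq i₀ (Finset.mem_union_left _ hi₀)).unique ⟨hiI, h⟩ ⟨hi₀, ReflTransGen.refl⟩
  -- decomposition of G
  have hGeq : G = prune G i₀ ∪ starE N i₀ := by
    ext p
    constructor
    · intro hp
      have hpe := mem_edgesOn.1 (hsub hp)
      rw [Finset.mem_union]
      by_cases h1 : p.1 = i₀
      · right
        have h2ne : p.2 ≠ i₀ := fun hh => absurd hpe.1 (by rw [h1, hh]; exact lt_irrefl i₀)
        have hadj : adjE G p.2 i₀ := Or.inr (by rw [← h1]; exact hp)
        have h2J : p.2 ∈ J := by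
          rcases Finset.mem_union.1 hpe.2.2 with h | h
          · exact absurd (hroot p.2 h (ReflTransGen.single (adjE_symm hadj))) h2ne
          · exact h
        have h2N : p.2 ∈ N := Finset.mem_filter.2 ⟨h2J, hadj⟩
        refine Finset.mem_image.2 ⟨p.2, h2N, ?_⟩
        rw [if_neg (by rw [h1] at hpe; exact not_lt.2 (le_of_lt hpe.1)), ← h1]
      · by_cases h2 : p.2 = i₀
        · right
          have hadj : adjE G p.1 i₀ := Or.inl (by rw [← h2]; exact hp)
          have h1J : p.1 ∈ J := by
            rcases Finset.mem_union.1 hpe.2.1 with h | h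
            · exact absurd (hroot p.1 h (ReflTransGen.single (adjE_symm hadj))) h1
            · exact h
          refine Finset.mem_image.2 ⟨p.1, Finset.mem_filter.2 ⟨h1J, hadj⟩, ?_⟩
          rw [if_pos (by rw [h2] at hpe; exact hpe.1), ← h2]
        · exact Or.inl (Finset.mem_filter.2 ⟨hp, h1, h2⟩)
    · intro hp
      rcases Finset.mem_union.1 hp with hp | hp
      · exact Finset.filter_subset _ _ hp
      · obtain ⟨k, hk, hke⟩ := Finset.mem_image.1 hp
        have hkadj : adjE G k i₀ := (Finset.mem_filter.1 hk).2
        have hkne : k ≠ i₀ := fun hh => hi₀N (hh ▸ hk)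
        split_ifs at hke with hlt
        · rcases hkadj with hm | hm
          · exact hke ▸ hm
          · exact absurd (mem_edgesOn.1 (hsub hm)).1 (not_lt.2 (le_of_lt hlt))
        · rcases hkadj with hm | hm
          · exact absurd (mem_edgesOn.1 (hsub hm)).1
              (not_lt.2 (le_of_lt (lt_of_le_of_ne (not_lt.1 hlt) (Ne.symm hkne))))
          · exact hke ▸ hm
  have havoid := prune_avoid (G := G) (i₀ := i₀)
  have hdisj : Disjoint (prune G i₀) (starE N i₀) := by
    rw [Finset.disjoint_left]
    intro p hp hp'
    rcases adjE_starE.1 (Or.inl (show (p.1, p.2) ∈ starE N i₀ from hp')) with ⟨h1, _⟩ | ⟨h1, _⟩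
    · exact (havoid p hp).1 h1
    · exact (havoid p hp).2 h1
  have hcardp : (prune G i₀).card = (J \ N).card := by
    have h1 : G.card = (prune G i₀).card + N.card := by
      conv_lhs => rw [hGeq]
      rw [Finset.card_union_of_disjoint hdisj, card_starE]
    rw [Finset.card_sdiff_of_subset hNJ]
    omega
  have hV' : (I.erase i₀ ∪ N) ∪ (J \ N) = (I ∪ J).erase i₀ := union_erase hd hi₀ hNJ
  have hVcard : (I.erase i₀ ∪ N).card = I.card - 1 + N.card := by
    rw [Finset.card_union_of_disjoint, Finset.card_erase_of_mem hi₀]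
    exact Finset.disjoint_of_subset_left (Finset.erase_subset _ _)
      (Finset.disjoint_of_subset_right hNJ hd)
  -- existence of roots in the pruned graph
  have hex : ∀ v ∈ (I ∪ J).erase i₀, ∃ r ∈ I.erase i₀ ∪ N,
      ReflTransGen (adjE (prune G i₀)) v r := by
    intro v hv
    rw [Finset.mem_erase] at hv
    obtain ⟨r, ⟨hrI, hvr⟩, _⟩ := huniq v hv.2
    rw [hGeq] at hvr
    rcases decomp havoid hvr with h1 | ⟨htv, _⟩
    · have hri : r ≠ i₀ := fun hh => hv.1 (reach_eq_of_avoid havoid (hh ▸ h1))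
      exact ⟨r, Finset.mem_union_left _ (Finset.mem_erase.2 ⟨hri, hrI⟩), h1⟩
    · rcases htv with rfl | ⟨k, hk, hvk⟩
      · exact absurd rfl hv.1
      · exact ⟨k, Finset.mem_union_right _ hk, hvk⟩
  refine ⟨hGeq, ?_⟩
  rw [mem_forestsOn, hV']
  refine ⟨?_, hcardp, ?_⟩
  · intro p hp
    have h1 := mem_edgesOn.1 (hsub (Finset.filter_subset _ _ hp))
    have h2 := prune_avoid p hp
    rw [mem_edgesOn]
    exact ⟨h1.1, Finset.mem_erase.2 ⟨h2.1, h1.2.1⟩, Finset.mem_erase.2 ⟨h2.2, h1.2.2⟩⟩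
  · intro v hv
    obtain ⟨r, hrR, hvr⟩ := hex v hv
    refine ⟨r, ⟨hrR, hvr⟩, ?_⟩
    intro y ⟨hyR, hvy⟩
    refine unique_root_of_card (prune G i₀) ((I ∪ J).erase i₀) (I.erase i₀ ∪ N) ?_ hex
      v y hyR r hrR hvy hvr
    rw [hcardp, hVcard, Finset.card_erase_of_mem (Finset.mem_union_left _ hi₀),
      Finset.card_union_of_disjoint hd, Finset.card_sdiff_of_subset hNJ]
    have h1 := Finset.card_le_card hNJ
    have h2 : 1 ≤ I.card := Finset.card_pos.2 ⟨i₀, hi₀⟩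
    omega
end Aux4

section Aux5
variable {n : ℕ}

open Relation Finset

lemma adjE_union {A B : Finset (Fin n × Fin n)} {x y : Fin n} :
    adjE (A ∪ B) x y ↔ adjE A x y ∨ adjE B x y := by
  simp only [adjE, Finset.mem_union]
  tauto

lemma disjoint_starE {G' : Finset (Fin n × Fin n)} {K : Finset (Fin n)} {i₀ : Fin n}
    (havoid : ∀ p ∈ G', p.1 ≠ i₀ ∧ p.2 ≠ i₀) : Disjoint G' (starE K i₀) := by
  rw [Finset.disjoint_left]
  intro p hp hp'
  rcases adjE_starE.1 (Or.inl (show (p.1, p.2) ∈ starE K i₀ from hp')) with ⟨h1, _⟩ | ⟨h1, _⟩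
  · exact (havoid p hp).1 h1
  · exact (havoid p hp).2 h1

lemma prune_union_starE {G' : Finset (Fin n × Fin n)} {K : Finset (Fin n)} {i₀ : Fin n}
    (havoid : ∀ p ∈ G', p.1 ≠ i₀ ∧ p.2 ≠ i₀) :
    prune (G' ∪ starE K i₀) i₀ = G' := by
  rw [prune, Finset.filter_union]
  rw [Finset.filter_true_of_mem havoid, Finset.filter_false_of_mem, Finset.union_empty]
  intro p hp
  rcases adjE_starE.1 (Or.inl (show (p.1, p.2) ∈ starE K i₀ from hp)) with ⟨h1, _⟩ | ⟨h1, _⟩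
  · exact fun hc => hc.1 h1
  · exact fun hc => hc.2 h1

lemma nbrs_union_starE {G' : Finset (Fin n × Fin n)} {K J : Finset (Fin n)} {i₀ : Fin n}
    (havoid : ∀ p ∈ G', p.1 ≠ i₀ ∧ p.2 ≠ i₀) (hKJ : K ⊆ J) (hi₀J : i₀ ∉ J) :
    nbrs (G' ∪ starE K i₀) J i₀ = K := by
  ext j
  simp only [nbrs, Finset.mem_filter]
  constructor
  · rintro ⟨hjJ, hadj⟩
    rcases adjE_union.1 hadj with hadj | hadj
    · rcases hadj with hm | hm
      · exact absurd rfl (havoid _ hm).2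
      · exact absurd rfl (havoid _ hm).1
    · rcases adjE_starE.1 hadj with ⟨rfl, _⟩ | ⟨_, hjK⟩
      · exact absurd hjJ hi₀J
      · exact hjK
  · intro hjK
    exact ⟨hKJ hjK, adjE_mono Finset.subset_union_right (adjE_starE.2 (Or.inr ⟨rfl, hjK⟩))⟩

lemma forestsOn_empty_empty : forestsOn n ∅ ∅ = {∅} := by
  ext G
  rw [mem_forestsOn, Finset.mem_singleton]
  constructor
  · rintro ⟨hsub, -, -⟩
    rw [← Finset.subset_empty]
    intro p hp
    have := mem_edgesOn.1 (hsub hp)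
    simpa using this.2.1
  · rintro rfl
    refine ⟨?_, by simp, by simp⟩
    intro p hp
    simp at hp

lemma forestsOn_empty_ne {J : Finset (Fin n)} (hJ : J.Nonempty) :
    forestsOn n ∅ J = ∅ := by
  rw [Finset.eq_empty_iff_forall_notMem]
  intro G hG
  obtain ⟨v, hv⟩ := hJ
  obtain ⟨i, ⟨hi, -⟩, -⟩ := (mem_forestsOn.1 hG).2.2 v (Finset.mem_union_right _ hv)
  simp at hi

end Aux5

/-- the Kirkwood–Salsburg-type recursion for `h` has the forest
formula as its unique solution:
`h(I,J) = (∏_{i∈I∪J} e^{2b_i}) Σ_{G ∈ 𝓕_I(J)} ∏_{{i,j}∈G} |ζ_{ij}|`. -/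
theorem h_recursion_solution (n : ℕ) (z : Fin n → Fin n → ℝ)
    (hz : ∀ i j, 0 ≤ z i j) (hzsym : ∀ i j, z i j = z j i)
    (b : Fin n → ℝ) (hb : ∀ i, 0 ≤ b i)
    (iota : Finset (Fin n) → Fin n) (hiota : ∀ I, I.Nonempty → iota I ∈ I)
    (h : Finset (Fin n) → Finset (Fin n) → ℝ)
    (h0 : ∀ J : Finset (Fin n), h ∅ J = if J = ∅ then 1 else 0)
    (hrec : ∀ I J : Finset (Fin n), I.Nonempty → Disjoint I J →
      h I J = Real.exp (2 * b (iota I)) *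
        ∑ K ∈ J.powerset, (∏ i ∈ K, z i (iota I)) *
          h (I.erase (iota I) ∪ K) (J \ K)) :
    ∀ I J : Finset (Fin n), Disjoint I J →
      h I J = (∏ i ∈ I ∪ J, Real.exp (2 * b i)) *
        ∑ G ∈ forestsOn n I J, ∏ p ∈ G, z p.1 p.2 := by
  classical
  have base : ∀ J : Finset (Fin n), h ∅ J = (∏ i ∈ (∅ : Finset (Fin n)) ∪ J, Real.exp (2 * b i)) *
      ∑ G ∈ forestsOn n ∅ J, ∏ p ∈ G, z p.1 p.2 := by
    intro J
    rw [h0]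
    by_cases hJ : J = ∅
    · subst hJ
      rw [if_pos rfl, forestsOn_empty_empty]
      simp
    · rw [if_neg hJ, forestsOn_empty_ne (Finset.nonempty_iff_ne_empty.2 hJ)]
      simp
  suffices H : ∀ N : ℕ, ∀ I J : Finset (Fin n), I.card + J.card ≤ N → Disjoint I J →
      h I J = (∏ i ∈ I ∪ J, Real.exp (2 * b i)) *
        ∑ G ∈ forestsOn n I J, ∏ p ∈ G, z p.1 p.2 by
    exact fun I J hd => H (I.card + J.card) I J le_rfl hd
  intro N
  induction N with
  | zero =>
    intro I J hle hd
    have hI : I = ∅ := Finset.card_eq_zero.1 (by omega)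
    subst hI
    exact base J
  | succ N ih =>
    intro I J hle hd
    by_cases hI : I = ∅
    · subst hI; exact base J
    have hIne : I.Nonempty := Finset.nonempty_iff_ne_empty.2 hI
    set i₀ := iota I with hi₀def
    have hi₀ : i₀ ∈ I := hiota I hIne
    have hi₀J : i₀ ∉ J := Finset.disjoint_left.1 hd hi₀
    have hi₀IJ : i₀ ∈ I ∪ J := Finset.mem_union_left _ hi₀
    -- the combinatorial identity
    have key : ∑ G ∈ forestsOn n I J, ∏ p ∈ G, z p.1 p.2
        = ∑ K ∈ J.powerset, (∏ i ∈ K, z i i₀) *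
            ∑ G' ∈ forestsOn n (I.erase i₀ ∪ K) (J \ K), ∏ p ∈ G', z p.1 p.2 := by
      have step1 : ∑ G ∈ forestsOn n I J, ∏ p ∈ G, z p.1 p.2
          = ∑ x ∈ (J.powerset.sigma fun K => forestsOn n (I.erase i₀ ∪ K) (J \ K)),
              (∏ i ∈ x.1, z i i₀) * ∏ p ∈ x.2, z p.1 p.2 := by
        refine Finset.sum_nbij'
          (i := fun G => (⟨nbrs G J i₀, prune G i₀⟩ :
            (_ : Finset (Fin n)) × Finset (Fin n × Fin n)))
          (j := fun x => x.2 ∪ starE x.1 i₀) ?_ ?_ ?_ ?_ ?_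
        · intro G hG
          rw [Finset.mem_sigma]
          exact ⟨Finset.mem_powerset.2 (Finset.filter_subset _ _),
            (forward hd hi₀ hG).2⟩
        · intro x hx
          rw [Finset.mem_sigma] at hx
          exact backward hd hi₀ (Finset.mem_powerset.1 hx.1) hx.2
        · intro G hG
          exact ((forward hd hi₀ hG).1).symm
        · intro x hx
          rw [Finset.mem_sigma] at hx
          have hKJ : x.1 ⊆ J := Finset.mem_powerset.1 hx.1
          have hsub' := (mem_forestsOn.1 hx.2).1
          have havoid : ∀ p ∈ x.2, p.1 ≠ i₀ ∧ p.2 ≠ i₀ := by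
            intro p hp
            have h1 := mem_edgesOn.1 (hsub' hp)
            rw [union_erase hd hi₀ hKJ] at h1
            exact ⟨(Finset.mem_erase.1 h1.2.1).1, (Finset.mem_erase.1 h1.2.2).1⟩
          have e1 : nbrs (x.2 ∪ starE x.1 i₀) J i₀ = x.1 :=
            nbrs_union_starE havoid hKJ hi₀J
          have e2 : prune (x.2 ∪ starE x.1 i₀) i₀ = x.2 :=
            prune_union_starE havoid
          rw [e1, e2]
        · intro G hG
          obtain ⟨hGeq, hmem⟩ := forward hd hi₀ hG
          have havoid := prune_avoid (G := G) (i₀ := i₀)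
          dsimp only
          conv_lhs => rw [hGeq]
          rw [Finset.prod_union (disjoint_starE havoid), prod_starE z hzsym, mul_comm]
      rw [step1, Finset.sum_sigma]
      refine Finset.sum_congr rfl fun K _ => ?_
      dsimp only
      rw [Finset.mul_sum]
    -- apply the induction hypothesis to each summand
    have hstep : ∀ K ∈ J.powerset, (∏ i ∈ K, z i i₀) * h (I.erase i₀ ∪ K) (J \ K)
        = (∏ i ∈ (I ∪ J).erase i₀, Real.exp (2 * b i)) *
          ((∏ i ∈ K, z i i₀) *
            ∑ G' ∈ forestsOn n (I.erase i₀ ∪ K) (J \ K), ∏ p ∈ G', z p.1 p.2) := by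
      intro K hK
      have hKJ : K ⊆ J := Finset.mem_powerset.1 hK
      have hcards : (I.erase i₀ ∪ K).card + (J \ K).card ≤ N := by
        have h1 := Finset.card_union_le (I.erase i₀) K
        have h2 := Finset.card_erase_of_mem hi₀
        have h3 := Finset.card_sdiff_of_subset hKJ
        have h4 := Finset.card_le_card hKJ
        have h5 : 1 ≤ I.card := Finset.card_pos.2 ⟨i₀, hi₀⟩
        omega
      have hdisj2 : Disjoint (I.erase i₀ ∪ K) (J \ K) := by
        rw [Finset.disjoint_union_left]
        exact ⟨Finset.disjoint_of_subset_left (Finset.erase_subset _ _)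
            (Finset.disjoint_of_subset_right (Finset.sdiff_subset) hd),
          (Finset.sdiff_disjoint).symm⟩
      rw [ih _ _ hcards hdisj2, union_erase hd hi₀ hKJ]
      ring
    rw [hrec I J hIne hd, Finset.sum_congr rfl hstep, ← Finset.mul_sum, ← hi₀def,
      ← key, ← Finset.mul_prod_erase _ _ hi₀IJ]
    ring
end

section
/- For forests on {1,…,n} rooted in a set I (disjoint from J, I∪J = vertex set) and any element ι ∈ I with I' = I∖{ι}: Σ_{G ∈ 𝓕_I(J)} ∏_{{i,j}∈G} w_{ij} = Σ_{K⊆J} (∏_{i∈K} w_{i,ι}) · Σ_{G' ∈ 𝓕_{I'∪K}(J∖K)} ∏_{{i,j}∈G'} w_{ij}, for arbitrary nonnegative weights w_{ij}. -/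
namespace FR
variable {n : ℕ}

lemma mem_edgesOn {V : Finset (Fin n)} {p : Fin n × Fin n} :
    p ∈ edgesOn n V ↔ p.1 < p.2 ∧ p.1 ∈ V ∧ p.2 ∈ V := by
  simp [edgesOn]

lemma mem_forestsOn {I J : Finset (Fin n)} {G : Finset (Fin n × Fin n)} :
    G ∈ forestsOn n I J ↔ G ⊆ edgesOn n (I ∪ J) ∧ G.card = J.card ∧
      ∀ v ∈ I ∪ J, ∃! i : Fin n, i ∈ I ∧ Relation.ReflTransGen (adjE G) v i := by
  simp [forestsOn, graphsOn, Finset.mem_filter, Finset.mem_powerset, and_assoc]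

lemma adjE_symm {G : Finset (Fin n × Fin n)} {i j : Fin n} (h : adjE G i j) : adjE G j i :=
  h.symm

lemma rtg_symm {G : Finset (Fin n × Fin n)} {i j : Fin n}
    (h : Relation.ReflTransGen (adjE G) i j) : Relation.ReflTransGen (adjE G) j i :=
  haveI : Std.Symm (adjE G) := ⟨fun _ _ hh => adjE_symm hh⟩
  Std.Symm.symm _ _ h

lemma rtg_mono {G₀ G : Finset (Fin n × Fin n)} (hsub : G₀ ⊆ G) {i j : Fin n}
    (h : Relation.ReflTransGen (adjE G₀) i j) : Relation.ReflTransGen (adjE G) i j :=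
  Relation.ReflTransGen.mono (fun _ _ hh => hh.imp (fun m => hsub m) (fun m => hsub m)) _ _ h

lemma surg {G₀ G : Finset (Fin n × Fin n)} {I₀ : Finset (Fin n)}
    (hstuck : ∀ a b, adjE G a b → ¬ adjE G₀ a b →
      (∃ i ∈ I₀, Relation.ReflTransGen (adjE G₀) b i) →
      ∃ i ∈ I₀, Relation.ReflTransGen (adjE G₀) a i)
    {v x : Fin n} (h : Relation.ReflTransGen (adjE G) v x)
    (hx : ∃ i ∈ I₀, Relation.ReflTransGen (adjE G₀) x i) :
    ∃ i ∈ I₀, Relation.ReflTransGen (adjE G₀) v i := by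
  induction h using Relation.ReflTransGen.head_induction_on with
  | refl => exact hx
  | @head a c h' _ ih =>
    by_cases hc : adjE G₀ a c
    · obtain ⟨i, hi, hp⟩ := ih
      exact ⟨i, hi, Relation.ReflTransGen.head hc hp⟩
    · exact hstuck a c h' hc ih

lemma iso {G₀ : Finset (Fin n × Fin n)} {ι : Fin n}
    (h : ∀ b, ¬ adjE G₀ ι b) {x : Fin n}
    (hp : Relation.ReflTransGen (adjE G₀) ι x) : x = ι := by
  induction hp with
  | refl => rfl
  | tail _ h2 ih => subst ih; exact absurd h2 (h _)

lemma count (G : Finset (Fin n × Fin n)) :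
    ∀ (V I : Finset (Fin n)),
      (∀ v ∈ V, ∃ i ∈ I, Relation.ReflTransGen (adjE G) v i) →
      V.card ≤ I.card + G.card := by
  induction G using Finset.strongInduction with
  | _ G IH =>
  intro V I hreach
  rcases G.eq_empty_or_nonempty with rfl | ⟨p₀, hp₀⟩
  · have hVI : V ⊆ I := by
      intro v hv
      obtain ⟨i, hi, hp⟩ := hreach v hv
      rcases hp.cases_head with rfl | ⟨c, hc, _⟩
      · exact hi
      · rcases hc with hc | hc <;> simp at hc
    simpa using Finset.card_le_card hVI
  · set a := p₀.1 with ha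
    set b := p₀.2 with hb
    set G₀ := G.erase p₀ with hG₀
    have hssub : G₀ ⊂ G := Finset.erase_ssubset hp₀
    have hcard : G₀.card = G.card - 1 := Finset.card_erase_of_mem hp₀
    have hGpos : 1 ≤ G.card := Finset.card_pos.2 ⟨p₀, hp₀⟩
    have hpair : ∀ x y : Fin n, adjE G x y → ¬ adjE G₀ x y →
        ((x, y) = p₀ ∨ (y, x) = p₀) := by
      intro x y hxy hnxy
      rcases hxy with h | h
      · left
        by_contra hne
        exact hnxy (Or.inl (Finset.mem_erase.2 ⟨hne, h⟩))
      · right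
        by_contra hne
        exact hnxy (Or.inr (Finset.mem_erase.2 ⟨hne, h⟩))
    by_cases hA : ∃ i ∈ I, Relation.ReflTransGen (adjE G₀) a i
    · have hall : ∀ v ∈ V, ∃ i ∈ insert b I, Relation.ReflTransGen (adjE G₀) v i := by
        intro v hv
        obtain ⟨i, hi, hp⟩ := hreach v hv
        refine surg ?_ hp ⟨i, Finset.mem_insert_of_mem hi, .refl⟩
        intro x y hxy hnxy _
        rcases hpair x y hxy hnxy with h | h
        · obtain ⟨i', hi', hp'⟩ := hA
          have hxa : x = a := by rw [ha, ← h]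
          exact ⟨i', Finset.mem_insert_of_mem hi', hxa ▸ hp'⟩
        · have hxb : x = b := by rw [hb, ← h]
          exact ⟨b, Finset.mem_insert_self b I, hxb ▸ .refl⟩
      have := IH G₀ hssub V (insert b I) hall
      have h2 := Finset.card_insert_le b I
      omega
    · by_cases hB : ∃ i ∈ I, Relation.ReflTransGen (adjE G₀) b i
      · have hall : ∀ v ∈ V, ∃ i ∈ insert a I, Relation.ReflTransGen (adjE G₀) v i := by
          intro v hv
          obtain ⟨i, hi, hp⟩ := hreach v hv
          refine surg ?_ hp ⟨i, Finset.mem_insert_of_mem hi, .refl⟩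
          intro x y hxy hnxy _
          rcases hpair x y hxy hnxy with h | h
          · have hxa : x = a := by rw [ha, ← h]
            exact ⟨a, Finset.mem_insert_self a I, hxa ▸ .refl⟩
          · obtain ⟨i', hi', hp'⟩ := hB
            have hxb : x = b := by rw [hb, ← h]
            exact ⟨i', Finset.mem_insert_of_mem hi', hxb ▸ hp'⟩
        have := IH G₀ hssub V (insert a I) hall
        have h2 := Finset.card_insert_le a I
        omega
      · have hall : ∀ v ∈ V, ∃ i ∈ I, Relation.ReflTransGen (adjE G₀) v i := by
          intro v hv
          obtain ⟨i, hi, hp⟩ := hreach v hv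
          refine surg ?_ hp ⟨i, hi, .refl⟩
          intro x y hxy hnxy hy
          rcases hpair x y hxy hnxy with h | h
          · have hyb : y = b := by rw [hb, ← h]
            exact absurd (hyb ▸ hy) hB
          · have hya : y = a := by rw [ha, ← h]
            exact absurd (hya ▸ hy) hA
        have := IH G₀ hssub V I hall
        omega

def eEdge (ι k : Fin n) : Fin n × Fin n := if ι < k then (ι, k) else (k, ι)

def delE (G : Finset (Fin n × Fin n)) (ι : Fin n) : Finset (Fin n × Fin n) :=
  G.filter fun p => p.1 ≠ ι ∧ p.2 ≠ ι

def nbrs (G : Finset (Fin n × Fin n)) (ι : Fin n) (J : Finset (Fin n)) : Finset (Fin n) :=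
  J.filter fun k => (ι, k) ∈ G ∨ (k, ι) ∈ G

lemma eEdge_cases (ι k : Fin n) : eEdge ι k = (ι, k) ∨ eEdge ι k = (k, ι) := by
  unfold eEdge; split <;> simp

lemma eEdge_inj {ι k k' : Fin n} (hk : k ≠ ι) (h : eEdge ι k = eEdge ι k') : k = k' := by
  unfold eEdge at h
  split_ifs at h <;> simp only [Prod.mk.injEq] at h
  · exact h.2
  · exact absurd h.2 hk
  · exact absurd h.1 hk
  · exact h.1

lemma eEdge_coord {ι k : Fin n} : (eEdge ι k).1 = ι ∨ (eEdge ι k).2 = ι := by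
  rcases eEdge_cases ι k with h | h <;> rw [h] <;> simp

lemma vset {I J K : Finset (Fin n)} {ι : Fin n} (hK : K ⊆ J) (hιJ : ι ∉ J) :
    (I.erase ι ∪ K) ∪ (J \ K) = (I ∪ J).erase ι := by
  rw [Finset.union_assoc, Finset.union_sdiff_of_subset hK,
    Finset.erase_union_distrib, Finset.erase_eq_of_notMem hιJ]

lemma prod_psi {K : Finset (Fin n)} {G' : Finset (Fin n × Fin n)} {ι : Fin n}
    (w : Fin n → Fin n → ℝ) (hwsym : ∀ i j, w i j = w j i)
    (hKι : ∀ k ∈ K, k ≠ ι) (hG'ne : ∀ p ∈ G', p.1 ≠ ι ∧ p.2 ≠ ι) :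
    ∏ p ∈ G' ∪ K.image (eEdge ι), w p.1 p.2 =
      (∏ i ∈ K, w i ι) * ∏ p ∈ G', w p.1 p.2 := by
  have hdisj : Disjoint G' (K.image (eEdge ι)) := by
    rw [Finset.disjoint_left]
    rintro p hp hpim
    obtain ⟨k, hk, rfl⟩ := Finset.mem_image.1 hpim
    rcases eEdge_coord (ι := ι) (k := k) with h | h
    · exact (hG'ne _ hp).1 h
    · exact (hG'ne _ hp).2 h
  have hinj : Set.InjOn (eEdge ι) K := fun k hk k' _ h => eEdge_inj (hKι k hk) h
  rw [Finset.prod_union hdisj, Finset.prod_image hinj, mul_comm]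
  congr 1
  refine Finset.prod_congr rfl fun k hk => ?_
  rcases eEdge_cases ι k with h | h
  · rw [h]; exact hwsym ι k
  · rw [h]

lemma forward {I J : Finset (Fin n)} (hdisj : Disjoint I J) {ι : Fin n} (hι : ι ∈ I)
    {G : Finset (Fin n × Fin n)} (hG : G ∈ forestsOn n I J) :
    (delE G ι ∪ (nbrs G ι J).image (eEdge ι) = G) ∧
      delE G ι ∈ forestsOn n (I.erase ι ∪ nbrs G ι J) (J \ nbrs G ι J) := by
  classical
  obtain ⟨hsub, hcard, hroot⟩ := mem_forestsOn.1 hG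
  set K := nbrs G ι J with hKdef
  set G' := delE G ι with hG'def
  have hKJ : K ⊆ J := Finset.filter_subset _ _
  have hιJ : ι ∉ J := fun h => Finset.disjoint_left.1 hdisj hι h
  have hedge : ∀ p ∈ G, p.1 < p.2 ∧ p.1 ∈ I ∪ J ∧ p.2 ∈ I ∪ J :=
    fun p hp => mem_edgesOn.1 (hsub hp)
  have hNJ : ∀ k, adjE G ι k → k ∈ J := by
    intro k hk
    have hkι : k ≠ ι := by
      rcases hk with h | h
      · exact ne_of_gt (hedge _ h).1
      · exact ne_of_lt (hedge _ h).1
    have hkIJ : k ∈ I ∪ J := by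
      rcases hk with h | h
      · exact (hedge _ h).2.2
      · exact (hedge _ h).2.1
    rcases Finset.mem_union.1 hkIJ with hkI | hkJ
    · have h1 := (hroot ι (Finset.mem_union_left _ hι)).unique
        ⟨hι, Relation.ReflTransGen.refl⟩ ⟨hkI, Relation.ReflTransGen.single hk⟩
      exact absurd h1 (Ne.symm hkι)
    · exact hkJ
  have hmemK : ∀ k, adjE G ι k → k ∈ K := fun k hk =>
    Finset.mem_filter.2 ⟨hNJ k hk, hk⟩
  have hadjK : ∀ k ∈ K, adjE G ι k := fun k hk => (Finset.mem_filter.1 hk).2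
  have heKG : ∀ k, adjE G ι k → eEdge ι k ∈ G := by
    intro k hk
    rcases hk with h | h
    · have hlt : ι < k := (hedge _ h).1
      rw [eEdge, if_pos hlt]; exact h
    · have hlt : k < ι := (hedge _ h).1
      rw [eEdge, if_neg (lt_asymm hlt)]; exact h
  have hG'sub : G' ⊆ G := Finset.filter_subset _ _
  have hG'ne : ∀ p ∈ G', p.1 ≠ ι ∧ p.2 ≠ ι := fun p hp => (Finset.mem_filter.1 hp).2
  have hiso : ∀ b, ¬ adjE G' ι b := by
    intro b hb
    rcases hb with h | h
    · exact (hG'ne _ h).1 rfl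
    · exact (hG'ne _ h).2 rfl
  have hKι : ∀ k ∈ K, k ≠ ι := fun k hk h => hιJ (h ▸ hKJ hk)
  have hsplit' : G.filter (fun p => ¬(p.1 ≠ ι ∧ p.2 ≠ ι)) = K.image (eEdge ι) := by
    ext p
    obtain ⟨x, y⟩ := p
    constructor
    · intro hp
      have hpG := (Finset.mem_filter.1 hp).1
      have hpι := (Finset.mem_filter.1 hp).2
      simp only [not_and_or, not_not] at hpι
      rcases hpι with h1 | h2
      · replace h1 : x = ι := h1
        subst h1
        have hadj : adjE G x y := Or.inl hpG
        have hyK : y ∈ K := hmemK _ hadj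
        refine Finset.mem_image.2 ⟨y, hyK, ?_⟩
        have hlt : x < y := (hedge _ hpG).1
        rw [eEdge, if_pos hlt]
      · replace h2 : y = ι := h2
        subst h2
        have hadj : adjE G y x := Or.inr hpG
        have hxK : x ∈ K := hmemK _ hadj
        refine Finset.mem_image.2 ⟨x, hxK, ?_⟩
        have hlt : x < y := (hedge _ hpG).1
        rw [eEdge, if_neg (lt_asymm hlt)]
    · intro hp
      obtain ⟨k, hk, he⟩ := Finset.mem_image.1 hp
      refine Finset.mem_filter.2 ⟨he ▸ heKG k (hadjK k hk), ?_⟩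
      simp only [not_and_or, not_not]
      rcases eEdge_cases ι k with h | h <;> rw [h] at he
      · left; injection he with h3 h4; exact h3.symm
      · right; injection he with h3 h4; exact h4.symm
  have hsplit : G' ∪ K.image (eEdge ι) = G := by
    rw [hG'def, delE, ← hsplit']
    exact Finset.filter_union_filter_not_eq _ G
  have hdisjsplit : Disjoint G' (K.image (eEdge ι)) := by
    rw [Finset.disjoint_left]
    rintro p hp hpim
    obtain ⟨k, hk, rfl⟩ := Finset.mem_image.1 hpim
    rcases eEdge_coord (ι := ι) (k := k) with h | h
    · exact (hG'ne _ hp).1 h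
    · exact (hG'ne _ hp).2 h
  have hinjK : Set.InjOn (eEdge ι) K := fun k hk k' _ h => eEdge_inj (hKι k hk) h
  have hcardsplit : G'.card + K.card = G.card := by
    rw [← hsplit, Finset.card_union_of_disjoint hdisjsplit,
      Finset.card_image_of_injOn hinjK]
  have hKle : K.card ≤ J.card := Finset.card_le_card hKJ
  have hG'card : G'.card = (J \ K).card := by
    rw [Finset.card_sdiff_of_subset hKJ]; omega
  have hV : (I.erase ι ∪ K) ∪ (J \ K) = (I ∪ J).erase ι := vset hKJ hιJ
  have hG'edges : G' ⊆ edgesOn n ((I.erase ι ∪ K) ∪ (J \ K)) := by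
    intro p hp
    have hpG := hG'sub hp
    have h1 := hedge p hpG
    have h2 := hG'ne p hp
    rw [mem_edgesOn, hV]
    exact ⟨h1.1, Finset.mem_erase.2 ⟨h2.1, h1.2.1⟩, Finset.mem_erase.2 ⟨h2.2, h1.2.2⟩⟩
  refine ⟨hsplit, mem_forestsOn.2 ⟨hG'edges, hG'card, ?_⟩⟩
  intro v hv
  rw [hV, Finset.mem_erase] at hv
  obtain ⟨hvι, hvIJ⟩ := hv
  -- existence
  obtain ⟨i, ⟨hiI, hpath⟩, _⟩ := hroot v hvIJ
  have hstuck : ∀ a b, adjE G a b → ¬ adjE G' a b →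
      (∃ i ∈ I ∪ K, Relation.ReflTransGen (adjE G') b i) →
      ∃ i ∈ I ∪ K, Relation.ReflTransGen (adjE G') a i := by
    intro a b hab hnab _
    have habι : a = ι ∨ b = ι := by
      rcases hab with h | h
      · have : ¬((a, b).1 ≠ ι ∧ (a, b).2 ≠ ι) := fun hc =>
          hnab (Or.inl (Finset.mem_filter.2 ⟨h, hc⟩))
        simpa only [not_and_or, not_not] using this
      · have : ¬((b, a).1 ≠ ι ∧ (b, a).2 ≠ ι) := fun hc =>
          hnab (Or.inr (Finset.mem_filter.2 ⟨h, hc⟩))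
        rcases (by simpa only [not_and_or, not_not] using this : b = ι ∨ a = ι) with h' | h'
        · exact Or.inr h'
        · exact Or.inl h'
    rcases habι with h | h
    · refine ⟨ι, Finset.mem_union_left _ hι, ?_⟩
      rw [h]
    · rw [h] at hab
      exact ⟨a, Finset.mem_union_right _ (hmemK a (adjE_symm hab)),
        Relation.ReflTransGen.refl⟩
  obtain ⟨i', hi', hp'⟩ := surg hstuck hpath ⟨i, Finset.mem_union_left _ hiI,
    Relation.ReflTransGen.refl⟩
  have hi'ι : i' ≠ ι := by
    rintro rfl
    exact hvι (iso hiso (rtg_symm hp'))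
  have hi'mem : i' ∈ I.erase ι ∪ K := by
    rcases Finset.mem_union.1 hi' with h | h
    · exact Finset.mem_union_left _ (Finset.mem_erase.2 ⟨hi'ι, h⟩)
    · exact Finset.mem_union_right _ h
  -- uniqueness
  have huniq : ∀ r₁ r₂, (r₁ ∈ I.erase ι ∪ K ∧ Relation.ReflTransGen (adjE G') v r₁) →
      (r₂ ∈ I.erase ι ∪ K ∧ Relation.ReflTransGen (adjE G') v r₂) → r₁ = r₂ := by
    rintro r₁ r₂ ⟨hr₁, hp₁⟩ ⟨hr₂, hp₂⟩
    rcases Finset.mem_union.1 hr₁ with h1 | h1 <;> rcases Finset.mem_union.1 hr₂ with h2 | h2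
    · exact (hroot v hvIJ).unique ⟨Finset.mem_of_mem_erase h1, rtg_mono hG'sub hp₁⟩
        ⟨Finset.mem_of_mem_erase h2, rtg_mono hG'sub hp₂⟩
    · exact absurd ((hroot v hvIJ).unique ⟨Finset.mem_of_mem_erase h1, rtg_mono hG'sub hp₁⟩
        ⟨hι, (rtg_mono hG'sub hp₂).tail (adjE_symm (hadjK _ h2))⟩) (Finset.mem_erase.1 h1).1
    · exact absurd ((hroot v hvIJ).unique ⟨Finset.mem_of_mem_erase h2, rtg_mono hG'sub hp₂⟩
        ⟨hι, (rtg_mono hG'sub hp₁).tail (adjE_symm (hadjK _ h1))⟩)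
        (Finset.mem_erase.1 h2).1
    · by_contra hne
      have hpath12 : Relation.ReflTransGen (adjE G') r₁ r₂ := (rtg_symm hp₁).trans hp₂
      set H := G.erase (eEdge ι r₁) with hHdef
      have heG : eEdge ι r₁ ∈ G := heKG _ (hadjK _ h1)
      have hG'H : G' ⊆ H := by
        intro p hp
        refine Finset.mem_erase.2 ⟨?_, hG'sub hp⟩
        intro he
        have hne2 := hG'ne p hp
        rcases eEdge_cases ι r₁ with h | h <;> rw [he, h] at hne2 <;> simp at hne2
      have he2mem : eEdge ι r₂ ∈ H := by
        refine Finset.mem_erase.2 ⟨?_, heKG _ (hadjK _ h2)⟩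
        intro he
        exact hne (eEdge_inj (hKι _ h2) he).symm
      have hadjH : adjE H ι r₂ := by
        rcases eEdge_cases ι r₂ with h | h
        · exact Or.inl (h ▸ he2mem)
        · exact Or.inr (h ▸ he2mem)
      have hr₁ι : Relation.ReflTransGen (adjE H) r₁ ι :=
        (rtg_mono hG'H hpath12).tail (adjE_symm hadjH)
      have hstuckH : ∀ a b, adjE G a b → ¬ adjE H a b →
          (∃ i ∈ I, Relation.ReflTransGen (adjE H) b i) →
          ∃ i ∈ I, Relation.ReflTransGen (adjE H) a i := by
        intro a b hab hnab _
        have hpe : (a, b) = eEdge ι r₁ ∨ (b, a) = eEdge ι r₁ := by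
          rcases hab with h | h
          · left; by_contra hne'
            exact hnab (Or.inl (Finset.mem_erase.2 ⟨hne', h⟩))
          · right; by_contra hne'
            exact hnab (Or.inr (Finset.mem_erase.2 ⟨hne', h⟩))
        have : a = ι ∨ a = r₁ := by
          rcases hpe with h | h <;> rcases eEdge_cases ι r₁ with h2 | h2 <;>
            rw [h2] at h <;> simp only [Prod.mk.injEq] at h
          · exact Or.inl h.1
          · exact Or.inr h.1
          · exact Or.inr h.2
          · exact Or.inl h.2
        rcases this with h | h
        · refine ⟨ι, hι, ?_⟩
          rw [h]
        · refine ⟨ι, hι, ?_⟩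
          rw [h]
          exact hr₁ι
      have hallH : ∀ u ∈ I ∪ J, ∃ i ∈ I, Relation.ReflTransGen (adjE H) u i := by
        intro u hu
        obtain ⟨i₀, ⟨hi₀, hp₀⟩, _⟩ := hroot u hu
        exact surg hstuckH hp₀ ⟨i₀, hi₀, Relation.ReflTransGen.refl⟩
      have hcount := count H (I ∪ J) I hallH
      have hHcard : H.card = G.card - 1 := Finset.card_erase_of_mem heG
      have hIJ : (I ∪ J).card = I.card + J.card := Finset.card_union_of_disjoint hdisj
      have hJpos : 0 < J.card := Finset.card_pos.2 ⟨r₁, hKJ h1⟩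
      omega
  exact ⟨i', ⟨hi'mem, hp'⟩, fun y hy => huniq y i' hy ⟨hi'mem, hp'⟩⟩


lemma backward {I J K : Finset (Fin n)} (hdisj : Disjoint I J) {ι : Fin n} (hι : ι ∈ I)
    (hK : K ⊆ J) {G' : Finset (Fin n × Fin n)}
    (hG' : G' ∈ forestsOn n (I.erase ι ∪ K) (J \ K)) :
    (G' ∪ K.image (eEdge ι)) ∈ forestsOn n I J ∧
      nbrs (G' ∪ K.image (eEdge ι)) ι J = K ∧
      delE (G' ∪ K.image (eEdge ι)) ι = G' := by
  classical
  obtain ⟨hsub', hcard', hroot'⟩ := mem_forestsOn.1 hG'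
  have hιJ : ι ∉ J := fun h => Finset.disjoint_left.1 hdisj hι h
  have hKι : ∀ k ∈ K, k ≠ ι := fun k hk h => hιJ (h ▸ hK hk)
  have hV : (I.erase ι ∪ K) ∪ (J \ K) = (I ∪ J).erase ι := vset hK hιJ
  have hedge' : ∀ p ∈ G', p.1 < p.2 ∧ (p.1 ≠ ι ∧ p.1 ∈ I ∪ J) ∧ (p.2 ≠ ι ∧ p.2 ∈ I ∪ J) := by
    intro p hp
    have h := mem_edgesOn.1 (hsub' hp)
    rw [hV] at h
    exact ⟨h.1, Finset.mem_erase.1 h.2.1, Finset.mem_erase.1 h.2.2⟩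
  have hiso' : ∀ b, ¬ adjE G' ι b := by
    intro b hb
    rcases hb with h | h
    · exact (hedge' _ h).2.1.1 rfl
    · exact (hedge' _ h).2.2.1 rfl
  set Ψ := G' ∪ K.image (eEdge ι) with hΨdef
  have hG'Ψ : G' ⊆ Ψ := Finset.subset_union_left
  have hiK : ∀ k ∈ K, eEdge ι k ∈ Ψ := fun k hk =>
    Finset.mem_union_right _ (Finset.mem_image_of_mem _ hk)
  have hadjιk : ∀ k ∈ K, adjE Ψ ι k := by
    intro k hk
    rcases eEdge_cases ι k with h | h
    · exact Or.inl (h ▸ hiK k hk)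
    · exact Or.inr (h ▸ hiK k hk)
  have hΨsub : Ψ ⊆ edgesOn n (I ∪ J) := by
    intro p hp
    rcases Finset.mem_union.1 hp with h | h
    · exact mem_edgesOn.2 ⟨(hedge' _ h).1, (hedge' _ h).2.1.2, (hedge' _ h).2.2.2⟩
    · obtain ⟨k, hk, rfl⟩ := Finset.mem_image.1 h
      have hkJ : k ∈ I ∪ J := Finset.mem_union_right _ (hK hk)
      have hιIJ : ι ∈ I ∪ J := Finset.mem_union_left _ hι
      rcases lt_trichotomy ι k with hlt | heq | hlt
      · rw [eEdge, if_pos hlt]; exact mem_edgesOn.2 ⟨hlt, hιIJ, hkJ⟩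
      · exact absurd heq.symm (hKι k hk)
      · rw [eEdge, if_neg (lt_asymm hlt)]; exact mem_edgesOn.2 ⟨hlt, hkJ, hιIJ⟩
  have hdisjΨ : Disjoint G' (K.image (eEdge ι)) := by
    rw [Finset.disjoint_left]
    rintro p hp hpim
    obtain ⟨k, hk, rfl⟩ := Finset.mem_image.1 hpim
    rcases eEdge_coord (ι := ι) (k := k) with h | h
    · exact (hedge' _ hp).2.1.1 h
    · exact (hedge' _ hp).2.2.1 h
  have hinjK : Set.InjOn (eEdge ι) K := fun k hk k' _ h => eEdge_inj (hKι k hk) h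
  have hΨcard : Ψ.card = J.card := by
    have h1 := Finset.card_sdiff_of_subset hK
    have h2 := Finset.card_le_card hK
    rw [hΨdef, Finset.card_union_of_disjoint hdisjΨ, Finset.card_image_of_injOn hinjK,
      hcard']
    omega
  have hadjΨ : ∀ a b, adjE Ψ a b →
      adjE G' a b ∨ ∃ k ∈ K, (a = ι ∧ b = k) ∨ (a = k ∧ b = ι) := by
    intro a b hab
    rcases hab with h | h <;> rcases Finset.mem_union.1 h with h' | h'
    · exact Or.inl (Or.inl h')
    · obtain ⟨k, hk, he⟩ := Finset.mem_image.1 h'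
      right
      refine ⟨k, hk, ?_⟩
      rcases eEdge_cases ι k with h2 | h2 <;> rw [h2] at he
      · injection he with h3 h4; exact Or.inl ⟨h3.symm, h4.symm⟩
      · injection he with h3 h4; exact Or.inr ⟨h3.symm, h4.symm⟩
    · exact Or.inl (Or.inr h')
    · obtain ⟨k, hk, he⟩ := Finset.mem_image.1 h'
      right
      refine ⟨k, hk, ?_⟩
      rcases eEdge_cases ι k with h2 | h2 <;> rw [h2] at he
      · injection he with h3 h4; exact Or.inr ⟨h4.symm, h3.symm⟩
      · injection he with h3 h4; exact Or.inl ⟨h4.symm, h3.symm⟩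
  -- the "component of ι" predicate
  have hAroot : ∀ i ∈ I, (i = ι ∨ ∃ k ∈ K, Relation.ReflTransGen (adjE G') i k) → i = ι := by
    rintro i hi (h | ⟨k, hk, hp⟩)
    · exact h
    · by_contra hne
      have hiV : i ∈ (I.erase ι ∪ K) ∪ (J \ K) :=
        Finset.mem_union_left _ (Finset.mem_union_left _ (Finset.mem_erase.2 ⟨hne, hi⟩))
      have h2 := (hroot' i hiV).unique
        ⟨Finset.mem_union_left _ (Finset.mem_erase.2 ⟨hne, hi⟩), Relation.ReflTransGen.refl⟩
        ⟨Finset.mem_union_right _ hk, hp⟩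
      exact Finset.disjoint_left.1 hdisj hi (h2 ▸ hK hk)
  have hINV : ∀ v x, Relation.ReflTransGen (adjE Ψ) v x →
      ((v = ι ∨ ∃ k ∈ K, Relation.ReflTransGen (adjE G') v k) ∧
       (x = ι ∨ ∃ k ∈ K, Relation.ReflTransGen (adjE G') x k)) ∨
      Relation.ReflTransGen (adjE G') v x := by
    intro v x hp
    induction hp with
    | refl => exact Or.inr Relation.ReflTransGen.refl
    | @tail b c hvb hbc ih =>
      rcases hadjΨ _ _ hbc with hG'bc | ⟨k, hk, hcase⟩
      · rcases ih with ⟨hAv, hAb⟩ | hvb'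
        · refine Or.inl ⟨hAv, ?_⟩
          rcases hAb with h | ⟨k, hk, hpbk⟩
          · rw [h] at hG'bc
            exact absurd hG'bc (hiso' c)
          · exact Or.inr ⟨k, hk, Relation.ReflTransGen.head (adjE_symm hG'bc) hpbk⟩
        · exact Or.inr (hvb'.tail hG'bc)
      · rcases hcase with ⟨hb, hc⟩ | ⟨hb, hc⟩
        · -- b = ι, c = k
          refine Or.inl ⟨?_, Or.inr ⟨k, hk, by rw [hc]⟩⟩
          rcases ih with ⟨hAv, _⟩ | hvι
          · exact hAv
          · rw [hb] at hvι
            exact Or.inl (iso hiso' (rtg_symm hvι))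
        · -- b = k, c = ι
          refine Or.inl ⟨?_, Or.inl hc⟩
          rcases ih with ⟨hAv, _⟩ | hvk
          · exact hAv
          · rw [hb] at hvk
            exact Or.inr ⟨k, hk, hvk⟩
  refine ⟨mem_forestsOn.2 ⟨hΨsub, hΨcard, ?_⟩, ?_, ?_⟩
  · intro v hv
    -- uniqueness (pairwise)
    have huniq : ∀ i₁ i₂, (i₁ ∈ I ∧ Relation.ReflTransGen (adjE Ψ) v i₁) →
        (i₂ ∈ I ∧ Relation.ReflTransGen (adjE Ψ) v i₂) → i₁ = i₂ := by
      have hcase2 : ∀ i₁ i₂, i₁ ∈ I → i₂ ∈ I →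
          ((v = ι ∨ ∃ k ∈ K, Relation.ReflTransGen (adjE G') v k) ∧
           (i₁ = ι ∨ ∃ k ∈ K, Relation.ReflTransGen (adjE G') i₁ k)) →
          Relation.ReflTransGen (adjE G') v i₂ → i₁ = i₂ := by
        rintro i₁ i₂ hi₁ hi₂ ⟨hAv, hAi₁⟩ hp₂
        have h1 : i₁ = ι := hAroot i₁ hi₁ hAi₁
        rcases hAv with hvι | ⟨k, hk, hpk⟩
        · rw [hvι] at hp₂
          rw [h1, iso hiso' hp₂]
        · have hvι : v ≠ ι := by
            rintro rfl
            exact hKι k hk (iso hiso' hpk)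
          by_cases h2 : i₂ = ι
          · rw [h1, h2]
          · have hvV : v ∈ (I.erase ι ∪ K) ∪ (J \ K) := by
              rw [hV]; exact Finset.mem_erase.2 ⟨hvι, hv⟩
            have h3 := (hroot' v hvV).unique
              ⟨Finset.mem_union_left _ (Finset.mem_erase.2 ⟨h2, hi₂⟩), hp₂⟩
              ⟨Finset.mem_union_right _ hk, hpk⟩
            exact absurd (h3 ▸ hK hk) (Finset.disjoint_left.1 hdisj hi₂)
      rintro i₁ i₂ ⟨hi₁, hp₁⟩ ⟨hi₂, hp₂⟩
      rcases hINV v i₁ hp₁ with h₁ | h₁ <;> rcases hINV v i₂ hp₂ with h₂ | h₂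
      · rw [hAroot i₁ hi₁ h₁.2, hAroot i₂ hi₂ h₂.2]
      · exact hcase2 i₁ i₂ hi₁ hi₂ h₁ h₂
      · exact (hcase2 i₂ i₁ hi₂ hi₁ h₂ h₁).symm
      · by_cases hvι : v = ι
        · rw [hvι] at h₁ h₂
          rw [iso hiso' h₁, iso hiso' h₂]
        · have h1ι : i₁ ≠ ι := by
            rintro rfl
            exact hvι (iso hiso' (rtg_symm h₁))
          have h2ι : i₂ ≠ ι := by
            rintro rfl
            exact hvι (iso hiso' (rtg_symm h₂))
          have hvV : v ∈ (I.erase ι ∪ K) ∪ (J \ K) := by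
            rw [hV]; exact Finset.mem_erase.2 ⟨hvι, hv⟩
          exact (hroot' v hvV).unique
            ⟨Finset.mem_union_left _ (Finset.mem_erase.2 ⟨h1ι, hi₁⟩), h₁⟩
            ⟨Finset.mem_union_left _ (Finset.mem_erase.2 ⟨h2ι, hi₂⟩), h₂⟩
    -- existence
    by_cases hvι : v = ι
    · refine ⟨ι, ⟨hι, by rw [hvι]⟩, fun y hy => huniq y ι hy ⟨hι, by rw [hvι]⟩⟩
    · have hvV : v ∈ (I.erase ι ∪ K) ∪ (J \ K) := by
        rw [hV]; exact Finset.mem_erase.2 ⟨hvι, hv⟩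
      obtain ⟨r, ⟨hr, hpr⟩, _⟩ := hroot' v hvV
      rcases Finset.mem_union.1 hr with hI' | hKr
      · refine ⟨r, ⟨Finset.mem_of_mem_erase hI', rtg_mono hG'Ψ hpr⟩,
          fun y hy => huniq y r hy ⟨Finset.mem_of_mem_erase hI', rtg_mono hG'Ψ hpr⟩⟩
      · have hp2 : Relation.ReflTransGen (adjE Ψ) v ι :=
          (rtg_mono hG'Ψ hpr).tail (adjE_symm (hadjιk r hKr))
        exact ⟨ι, ⟨hι, hp2⟩, fun y hy => huniq y ι hy ⟨hι, hp2⟩⟩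
  · -- nbrs Ψ ι J = K
    ext k
    constructor
    · intro hk
      obtain ⟨hkJ, hadj⟩ := Finset.mem_filter.1 hk
      rcases hadjΨ ι k hadj with h | ⟨k', hk', hcase⟩
      · exact absurd h (hiso' k)
      · rcases hcase with ⟨_, h2⟩ | ⟨h1, h2⟩
        · rw [h2]; exact hk'
        · rw [← h1] at hk'
          exact absurd (hK hk') hιJ
    · intro hk
      refine Finset.mem_filter.2 ⟨hK hk, ?_⟩
      exact hadjιk k hk
  · -- delE Ψ ι = G'
    ext p
    constructor
    · intro hp
      obtain ⟨hpΨ, hpι⟩ := Finset.mem_filter.1 hp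
      rcases Finset.mem_union.1 hpΨ with h | h
      · exact h
      · obtain ⟨k, hk, rfl⟩ := Finset.mem_image.1 h
        rcases eEdge_coord (ι := ι) (k := k) with h2 | h2
        · exact absurd h2 hpι.1
        · exact absurd h2 hpι.2
    · intro hp
      exact Finset.mem_filter.2 ⟨hG'Ψ hp,
        (hedge' _ hp).2.1.1, (hedge' _ hp).2.2.1⟩

end FR

/-- the root-deletion recursion for rooted forests. For disjoint
`I, J`, `ι ∈ I`, `I' = I ∖ {ι}` and nonnegative weights `w`:
`Σ_{G ∈ 𝓕_I(J)} ∏ w = Σ_{K⊆J} (∏_{i∈K} w_{iι}) Σ_{G' ∈ 𝓕_{I'∪K}(J∖K)} ∏ w`. -/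
theorem forest_recursion (n : ℕ) (w : Fin n → Fin n → ℝ)
    (hw : ∀ i j, 0 ≤ w i j) (hwsym : ∀ i j, w i j = w j i)
    (I J : Finset (Fin n)) (hdisj : Disjoint I J) (ι : Fin n) (hι : ι ∈ I) :
    ∑ G ∈ forestsOn n I J, ∏ p ∈ G, w p.1 p.2 =
      ∑ K ∈ J.powerset, (∏ i ∈ K, w i ι) *
        ∑ G ∈ forestsOn n (I.erase ι ∪ K) (J \ K), ∏ p ∈ G, w p.1 p.2 := by
  classical
  have hιJ : ι ∉ J := fun h => Finset.disjoint_left.1 hdisj hι h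
  have hmul : ∀ K ∈ J.powerset,
      (∏ i ∈ K, w i ι) * ∑ G ∈ forestsOn n (I.erase ι ∪ K) (J \ K), ∏ p ∈ G, w p.1 p.2 =
      ∑ G ∈ forestsOn n (I.erase ι ∪ K) (J \ K), (∏ i ∈ K, w i ι) * ∏ p ∈ G, w p.1 p.2 :=
    fun K _ => Finset.mul_sum _ _ _
  rw [Finset.sum_congr rfl hmul, Finset.sum_sigma']
  refine Finset.sum_nbij'
    (fun G => (⟨FR.nbrs G ι J, FR.delE G ι⟩ : (_ : Finset (Fin n)) × Finset (Fin n × Fin n)))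
    (fun x => x.2 ∪ x.1.image (FR.eEdge ι)) ?_ ?_ ?_ ?_ ?_
  · intro G hG
    exact Finset.mem_sigma.2 ⟨Finset.mem_powerset.2 (Finset.filter_subset _ _),
      (FR.forward hdisj hι hG).2⟩
  · rintro ⟨K, G'⟩ hx
    obtain ⟨h1, h2⟩ := Finset.mem_sigma.1 hx
    exact (FR.backward hdisj hι (Finset.mem_powerset.1 h1) h2).1
  · intro G hG
    exact (FR.forward hdisj hι hG).1
  · rintro ⟨K, G'⟩ hx
    obtain ⟨h1, h2⟩ := Finset.mem_sigma.1 hx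
    obtain ⟨_, h3, h4⟩ := FR.backward hdisj hι (Finset.mem_powerset.1 h1) h2
    simp only [h3, h4]
  · intro G hG
    obtain ⟨hsplit, _⟩ := FR.forward hdisj hι hG
    conv_lhs => rw [← hsplit]
    refine FR.prod_psi w hwsym ?_ ?_
    · exact fun k hk h => hιJ (h ▸ Finset.filter_subset _ J hk)
    · exact fun p hp => (Finset.mem_filter.1 hp).2
end

section
/- Brydges–Battle–Federbush tree identity: for complex numbers v_{ij} = v_{ji}, 1 ≤ i < j ≤ n, one has Σ_{G ∈ 𝒞_n} ∏_{{i,j}∈G} (e^{−v_{ij}} − 1) = Σ_{T ∈ 𝒯_n} ∏_{{i,j}∈T} (−v_{ij}) ∫ dλ_T({s_{ij}}) e^{−Σ_{i<j} s_{ij} v_{ij}}, where λ_T is a probability measure on [0,1]^{n(n−1)/2} depending only on the tree T. -/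
open MeasureTheory

namespace BBFAux

open Finset

variable {n : ℕ}

def toSG (G : Finset (Fin n × Fin n)) : SimpleGraph (Fin n) :=
  SimpleGraph.fromRel (fun i j => (i, j) ∈ G)

lemma toSG_adj {G : Finset (Fin n × Fin n)} {a b : Fin n} :
    (toSG G).Adj a b ↔ a ≠ b ∧ ((a, b) ∈ G ∨ (b, a) ∈ G) := by
  simp [toSG, SimpleGraph.fromRel_adj]

lemma mem_edgesOn {p : Fin n × Fin n} : p ∈ edgesOn n Finset.univ ↔ p.1 < p.2 := by
  simp [edgesOn]

lemma lt_of_mem_edges {G : Finset (Fin n × Fin n)} (hG : G ⊆ edgesOn n Finset.univ)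
    {p : Fin n × Fin n} (hp : p ∈ G) : p.1 < p.2 := mem_edgesOn.1 (hG hp)

lemma adj_of_mem {G : Finset (Fin n × Fin n)} (hG : G ⊆ edgesOn n Finset.univ)
    {a b : Fin n} (hp : (a, b) ∈ G) : (toSG G).Adj a b :=
  toSG_adj.2 ⟨ne_of_lt (lt_of_mem_edges hG hp), Or.inl hp⟩

lemma toSG_mono {G H : Finset (Fin n × Fin n)} (h : G ⊆ H) : toSG G ≤ toSG H := by
  intro a b hab
  rw [toSG_adj] at hab ⊢
  exact ⟨hab.1, hab.2.imp (@h _) (@h _)⟩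

lemma reflTransGen_iff_reachable {G : Finset (Fin n × Fin n)} (hG : G ⊆ edgesOn n Finset.univ)
    {i j : Fin n} :
    Relation.ReflTransGen (adjE G) i j ↔ (toSG G).Reachable i j := by
  constructor
  · intro h
    induction h with
    | refl => exact SimpleGraph.Reachable.refl _
    | @tail b c _ hbc ih =>
      have hne : b ≠ c := by
        rintro rfl
        rcases hbc with h | h <;> exact absurd (lt_of_mem_edges hG h) (lt_irrefl _)
      exact ih.trans (SimpleGraph.Adj.reachable (toSG_adj.2 ⟨hne, hbc⟩))
  · intro h
    rw [SimpleGraph.reachable_iff_reflTransGen] at h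
    exact Relation.ReflTransGen.mono (fun a b hab => (toSG_adj.1 hab).2) _ _ h

lemma connOn_iff (hn : 1 ≤ n) {G : Finset (Fin n × Fin n)} (hG : G ⊆ edgesOn n Finset.univ) :
    ConnOn Finset.univ G ↔ (toSG G).Connected := by
  haveI : Nonempty (Fin n) := ⟨⟨0, hn⟩⟩
  constructor
  · intro ⟨_, h⟩
    refine ⟨fun i j => ?_⟩
    exact (reflTransGen_iff_reachable hG).1 (h i (mem_univ i) j (mem_univ j))
  · intro h
    exact ⟨⟨⟨0, hn⟩, mem_univ _⟩, fun i _ j _ =>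
      (reflTransGen_iff_reachable hG).2 (h.preconnected i j)⟩

open Classical in
/-- candidates for the BFS parent of `v`. -/
noncomputable def cand (G : Finset (Fin n × Fin n)) (r v : Fin n) : Finset (Fin n) :=
  Finset.univ.filter fun u => (toSG G).Adj u v ∧ (toSG G).dist r u + 1 = (toSG G).dist r v

/-- the BFS parent of `v`: the least neighbour in the previous layer. -/
noncomputable def par (G : Finset (Fin n × Fin n)) (r v : Fin n) : Fin n :=
  if h : (cand G r v).Nonempty then (cand G r v).min' h else v

lemma mem_cand {G : Finset (Fin n × Fin n)} {r v u : Fin n} :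
    u ∈ cand G r v ↔ (toSG G).Adj u v ∧ (toSG G).dist r u + 1 = (toSG G).dist r v := by
  simp [cand]

lemma dist_le_dist_add_one {V : Type*} {G : SimpleGraph V} {r a b : V}
    (hr : G.Reachable r a) (h : G.Adj a b) : G.dist r b ≤ G.dist r a + 1 := by
  obtain ⟨p, hp⟩ := hr.exists_walk_length_eq_dist
  calc G.dist r b ≤ (p.concat h).length := SimpleGraph.dist_le _
    _ = p.length + 1 := SimpleGraph.Walk.length_concat _ _
    _ = G.dist r a + 1 := by rw [hp]

lemma cand_nonempty {G : Finset (Fin n × Fin n)} {r v : Fin n}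
    (hc : (toSG G).Connected) (hv : v ≠ r) : (cand G r v).Nonempty := by
  obtain ⟨p, hp⟩ := hc.exists_walk_length_eq_dist v r
  cases p with
  | nil => exact absurd rfl hv
  | @cons _ u _ h q =>
    refine ⟨u, mem_cand.2 ⟨h.symm, ?_⟩⟩
    have hq : (toSG G).dist r u ≤ q.length := by
      calc (toSG G).dist r u = (toSG G).dist u r := SimpleGraph.dist_comm
        _ ≤ q.length := SimpleGraph.dist_le _
    have hlen : q.length + 1 = (toSG G).dist v r := by
      simpa [SimpleGraph.Walk.length_cons] using hp
    have h1 : (toSG G).dist r v ≤ (toSG G).dist r u + 1 :=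
      dist_le_dist_add_one ⟨q.reverse⟩ h.symm
    have h2 : (toSG G).dist v r = (toSG G).dist r v := SimpleGraph.dist_comm
    omega

lemma par_mem_cand {G : Finset (Fin n × Fin n)} {r v : Fin n}
    (hc : (toSG G).Connected) (hv : v ≠ r) : par G r v ∈ cand G r v := by
  rw [par, dif_pos (cand_nonempty hc hv)]
  exact Finset.min'_mem _ _

lemma par_adj {G : Finset (Fin n × Fin n)} {r v : Fin n}
    (hc : (toSG G).Connected) (hv : v ≠ r) : (toSG G).Adj (par G r v) v :=
  (mem_cand.1 (par_mem_cand hc hv)).1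

lemma par_dist {G : Finset (Fin n × Fin n)} {r v : Fin n}
    (hc : (toSG G).Connected) (hv : v ≠ r) :
    (toSG G).dist r (par G r v) + 1 = (toSG G).dist r v :=
  (mem_cand.1 (par_mem_cand hc hv)).2

lemma par_min {G : Finset (Fin n × Fin n)} {r v u : Fin n}
    (hu : u ∈ cand G r v) : par G r v ≤ u := by
  rw [par, dif_pos ⟨u, hu⟩]
  exact Finset.min'_le _ _ hu

def op (a b : Fin n) : Fin n × Fin n := if a < b then (a, b) else (b, a)

lemma op_eq_or (a b : Fin n) : op a b = (a, b) ∨ op a b = (b, a) := by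
  unfold op; split <;> simp

lemma op_cases {a b c d : Fin n} (h : op a b = (c, d)) :
    (a = c ∧ b = d) ∨ (a = d ∧ b = c) := by
  rcases op_eq_or a b with h' | h' <;> rw [h'] at h <;>
    obtain ⟨h1, h2⟩ := Prod.mk.injEq .. ▸ h
  · exact Or.inl ⟨h1, h2⟩
  · exact Or.inr ⟨h2, h1⟩

lemma op_eq_op {a b c d : Fin n} (h : op a b = op c d) :
    (a = c ∧ b = d) ∨ (a = d ∧ b = c) := by
  rcases op_eq_or c d with h' | h' <;> rw [h'] at h
  · exact op_cases h
  · exact (op_cases h).symm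

lemma op_mem_of_adj {G : Finset (Fin n × Fin n)} (hG : G ⊆ edgesOn n Finset.univ)
    {a b : Fin n} (h : (toSG G).Adj a b) : op a b ∈ G := by
  rcases (toSG_adj.1 h).2 with hm | hm
  · rwa [op, if_pos (lt_of_mem_edges hG hm)]
  · rw [op, if_neg (asymm (lt_of_mem_edges hG hm) : ¬ a < b)]
    exact hm


variable {n : ℕ}

/-- The BFS (Penrose) spanning tree of `G` rooted at `r`. -/
noncomputable def PT (G : Finset (Fin n × Fin n)) (r : Fin n) : Finset (Fin n × Fin n) :=
  (Finset.univ.erase r).image fun v => op (par G r v) v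

lemma mem_PT {G : Finset (Fin n × Fin n)} {r : Fin n} {p : Fin n × Fin n} :
    p ∈ PT G r ↔ ∃ v, v ≠ r ∧ p = op (par G r v) v := by
  simp [PT, eq_comm]

lemma PT_subset {G : Finset (Fin n × Fin n)} {r : Fin n}
    (hG : G ⊆ edgesOn n Finset.univ) (hc : (toSG G).Connected) : PT G r ⊆ G := by
  intro p hp
  obtain ⟨v, hv, rfl⟩ := mem_PT.1 hp
  exact op_mem_of_adj hG (par_adj hc hv)

lemma PT_card {G : Finset (Fin n × Fin n)} {r : Fin n} (hc : (toSG G).Connected) :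
    (PT G r).card = n - 1 := by
  rw [PT, Finset.card_image_of_injOn, Finset.card_erase_of_mem (mem_univ r), Finset.card_univ,
    Fintype.card_fin]
  intro v hv w hw h
  have hv' : v ≠ r := Finset.ne_of_mem_erase hv
  have hw' : w ≠ r := Finset.ne_of_mem_erase hw
  have hdv := par_dist hc hv'
  have hdw := par_dist hc hw'
  rcases op_eq_op h with ⟨h1, h2⟩ | ⟨h1, h2⟩
  · exact h2
  · rw [h1] at hdv; rw [← h2] at hdw; omega

lemma adj_PT_of_par {G : Finset (Fin n × Fin n)} {r v : Fin n}
    (hc : (toSG G).Connected) (hv : v ≠ r) : (toSG (PT G r)).Adj (par G r v) v := by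
  have hne : par G r v ≠ v := (par_adj hc hv).ne
  have hmem : op (par G r v) v ∈ PT G r := mem_PT.2 ⟨v, hv, rfl⟩
  rcases op_eq_or (par G r v) v with h' | h' <;> rw [h'] at hmem
  · exact toSG_adj.2 ⟨hne, Or.inl hmem⟩
  · exact toSG_adj.2 ⟨hne, Or.inr hmem⟩

lemma PT_reach {G : Finset (Fin n × Fin n)} {r : Fin n} (hc : (toSG G).Connected) :
    ∀ v, (toSG (PT G r)).Reachable r v := by
  have key : ∀ k v, (toSG G).dist r v = k → (toSG (PT G r)).Reachable r v := by
    intro k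
    induction k using Nat.strong_induction_on with
    | _ k ih =>
      intro v hv
      by_cases hvr : v = r
      · subst hvr; exact SimpleGraph.Reachable.refl _
      · have hd := par_dist hc hvr
        have : (toSG (PT G r)).Reachable r (par G r v) :=
          ih ((toSG G).dist r (par G r v)) (by omega) _ rfl
        exact this.trans (adj_PT_of_par hc hvr).reachable
  intro v; exact key _ v rfl

lemma PT_connected (hn : 1 ≤ n) {G : Finset (Fin n × Fin n)} {r : Fin n}
    (hc : (toSG G).Connected) : (toSG (PT G r)).Connected := by
  haveI : Nonempty (Fin n) := ⟨⟨0, hn⟩⟩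
  exact ⟨fun i j => ((PT_reach hc i).symm.trans (PT_reach hc j))⟩

lemma dist_le_dist_subgraph {G H : Finset (Fin n × Fin n)} (hGH : G ⊆ H) {a b : Fin n}
    (hre : (toSG G).Reachable a b) : (toSG H).dist a b ≤ (toSG G).dist a b := by
  obtain ⟨p, hp⟩ := hre.exists_walk_length_eq_dist
  calc (toSG H).dist a b ≤ (p.mapLe (toSG_mono hGH)).length := SimpleGraph.dist_le _
    _ = p.length := SimpleGraph.Walk.length_map _ _
    _ = (toSG G).dist a b := hp

lemma PT_dist {G : Finset (Fin n × Fin n)} {r : Fin n}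
    (hG : G ⊆ edgesOn n Finset.univ) (hc : (toSG G).Connected) (v : Fin n) :
    (toSG (PT G r)).dist r v = (toSG G).dist r v := by
  refine le_antisymm ?_ (dist_le_dist_subgraph (PT_subset hG hc) (PT_reach hc v))
  have key : ∀ k v, (toSG G).dist r v = k → (toSG (PT G r)).dist r v ≤ (toSG G).dist r v := by
    intro k
    induction k using Nat.strong_induction_on with
    | _ k ih =>
      intro v hv
      by_cases hvr : v = r
      · subst hvr; simp [SimpleGraph.dist_self]
      · have hd := par_dist hc hvr
        have h1 : (toSG (PT G r)).dist r v ≤ (toSG (PT G r)).dist r (par G r v) + 1 :=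
          dist_le_dist_add_one (PT_reach hc _) (adj_PT_of_par hc hvr)
        have h2 : (toSG (PT G r)).dist r (par G r v) ≤ (toSG G).dist r (par G r v) :=
          ih ((toSG G).dist r (par G r v)) (by omega) _ rfl
        omega
  exact key _ v rfl

lemma PT_par {G : Finset (Fin n × Fin n)} {r v : Fin n}
    (hG : G ⊆ edgesOn n Finset.univ) (hc : (toSG G).Connected) (hv : v ≠ r) :
    par (PT G r) r v = par G r v := by
  have hmem : par G r v ∈ cand (PT G r) r v := by
    rw [mem_cand]
    refine ⟨adj_PT_of_par hc hv, ?_⟩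
    rw [PT_dist hG hc, PT_dist hG hc]
    exact par_dist hc hv
  have huniq : ∀ u ∈ cand (PT G r) r v, u = par G r v := by
    intro u hu
    obtain ⟨hadj, hdist⟩ := mem_cand.1 hu
    rw [PT_dist hG hc, PT_dist hG hc] at hdist
    rcases (toSG_adj.1 hadj).2 with hm | hm
    · obtain ⟨w, hw, hop⟩ := mem_PT.1 hm
      rcases op_cases hop.symm with ⟨h1, h2⟩ | ⟨h1, h2⟩
      · subst h2; exact h1.symm
      · exfalso
        have hdw := par_dist hc hw
        subst h2; rw [h1] at hdw
        omega
    · obtain ⟨w, hw, hop⟩ := mem_PT.1 hm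
      rcases op_cases hop.symm with ⟨h1, h2⟩ | ⟨h1, h2⟩
      · exfalso
        have hdw := par_dist hc hw
        subst h2; rw [h1] at hdw
        omega
      · subst h2; exact h1.symm
  have hne : (cand (PT G r) r v).Nonempty := ⟨_, hmem⟩
  rw [par, dif_pos hne]
  exact le_antisymm (Finset.min'_le _ _ hmem) (le_of_eq (huniq _ (Finset.min'_mem _ hne)).symm)


open Classical in
/-- The maximal graph with Penrose tree `T`. -/
noncomputable def RT (T : Finset (Fin n × Fin n)) (r : Fin n) : Finset (Fin n × Fin n) :=
  (edgesOn n Finset.univ).filter fun p =>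
    p ∈ T ∨ (toSG T).dist r p.1 = (toSG T).dist r p.2 ∨
      ((toSG T).dist r p.2 = (toSG T).dist r p.1 + 1 ∧ par T r p.2 < p.1) ∨
      ((toSG T).dist r p.1 = (toSG T).dist r p.2 + 1 ∧ par T r p.1 < p.2)

lemma mem_RT {T : Finset (Fin n × Fin n)} {r : Fin n} {p : Fin n × Fin n} :
    p ∈ RT T r ↔ p ∈ edgesOn n Finset.univ ∧
      (p ∈ T ∨ (toSG T).dist r p.1 = (toSG T).dist r p.2 ∨
      ((toSG T).dist r p.2 = (toSG T).dist r p.1 + 1 ∧ par T r p.2 < p.1) ∨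
      ((toSG T).dist r p.1 = (toSG T).dist r p.2 + 1 ∧ par T r p.1 < p.2)) := by
  simp [RT]

lemma RT_subset_edges {T : Finset (Fin n × Fin n)} {r : Fin n} :
    RT T r ⊆ edgesOn n Finset.univ := Finset.filter_subset _ _

lemma T_subset_RT {T : Finset (Fin n × Fin n)} {r : Fin n}
    (hTe : T ⊆ edgesOn n Finset.univ) : T ⊆ RT T r :=
  fun p hp => mem_RT.2 ⟨hTe hp, Or.inl hp⟩

lemma subset_RT_PT {G : Finset (Fin n × Fin n)} {r : Fin n}
    (hG : G ⊆ edgesOn n Finset.univ) (hc : (toSG G).Connected) : G ⊆ RT (PT G r) r := by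
  intro p hp
  have hlt := lt_of_mem_edges hG hp
  have hp' : (p.1, p.2) ∈ G := by simpa using hp
  have hadj : (toSG G).Adj p.1 p.2 := adj_of_mem hG hp'
  have h12 : (toSG G).dist r p.2 ≤ (toSG G).dist r p.1 + 1 :=
    dist_le_dist_add_one (hc.preconnected r p.1) hadj
  have h21 : (toSG G).dist r p.1 ≤ (toSG G).dist r p.2 + 1 :=
    dist_le_dist_add_one (hc.preconnected r p.2) hadj.symm
  refine mem_RT.2 ⟨hG hp, ?_⟩
  rcases Nat.lt_trichotomy ((toSG G).dist r p.1) ((toSG G).dist r p.2) with hlt' | heq | hlt'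
  · -- d p.2 = d p.1 + 1
    have hd2 : (toSG G).dist r p.2 = (toSG G).dist r p.1 + 1 := by omega
    have hv : p.2 ≠ r := by
      intro h
      rw [h, SimpleGraph.dist_self] at hd2
      omega
    have hcand : p.1 ∈ cand G r p.2 := mem_cand.2 ⟨hadj, by omega⟩
    rcases eq_or_lt_of_le (par_min hcand) with heq2 | hlt2
    · refine Or.inl (mem_PT.2 ⟨p.2, hv, ?_⟩)
      rw [heq2, op, if_pos hlt]
    · refine Or.inr (Or.inr (Or.inl ⟨?_, ?_⟩))
      · rw [PT_dist hG hc, PT_dist hG hc]; omega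
      · rw [PT_par hG hc hv]; exact hlt2
  · exact Or.inr (Or.inl (by rw [PT_dist hG hc, PT_dist hG hc]; exact heq))
  · -- d p.1 = d p.2 + 1
    have hd1 : (toSG G).dist r p.1 = (toSG G).dist r p.2 + 1 := by omega
    have hv : p.1 ≠ r := by
      intro h
      rw [h, SimpleGraph.dist_self] at hd1
      omega
    have hcand : p.2 ∈ cand G r p.1 := mem_cand.2 ⟨hadj.symm, by omega⟩
    rcases eq_or_lt_of_le (par_min hcand) with heq2 | hlt2
    · refine Or.inl (mem_PT.2 ⟨p.1, hv, ?_⟩)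
      rw [heq2, op, if_neg (asymm hlt : ¬ p.2 < p.1)]
    · refine Or.inr (Or.inr (Or.inr ⟨?_, ?_⟩))
      · rw [PT_dist hG hc, PT_dist hG hc]; omega
      · rw [PT_par hG hc hv]; exact hlt2

lemma PT_self {T : Finset (Fin n × Fin n)} {r : Fin n}
    (hTe : T ⊆ edgesOn n Finset.univ) (hTc : (toSG T).Connected)
    (hTcard : T.card = n - 1) : PT T r = T :=
  Finset.eq_of_subset_of_card_le (PT_subset hTe hTc) (by rw [PT_card hTc, hTcard])

lemma RT_layers {T : Finset (Fin n × Fin n)} {r : Fin n}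
    (hTe : T ⊆ edgesOn n Finset.univ) (hTc : (toSG T).Connected)
    (hTcard : T.card = n - 1) {p : Fin n × Fin n} (hp : p ∈ RT T r) :
    (toSG T).dist r p.2 ≤ (toSG T).dist r p.1 + 1 ∧
      (toSG T).dist r p.1 ≤ (toSG T).dist r p.2 + 1 := by
  obtain ⟨-, h⟩ := mem_RT.1 hp
  rcases h with hT | h | ⟨h, -⟩ | ⟨h, -⟩
  · obtain ⟨v, hv, rfl⟩ := mem_PT.1 ((PT_self hTe hTc hTcard (r := r)).symm ▸ hT)
    have hd := par_dist hTc hv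
    rcases op_eq_or (par T r v) v with h' | h' <;> rw [h'] <;> dsimp <;> omega
  · omega
  · omega
  · omega

lemma step_T {T G : Finset (Fin n × Fin n)} {r : Fin n}
    (hTe : T ⊆ edgesOn n Finset.univ) (hTc : (toSG T).Connected)
    (hTcard : T.card = n - 1) (hGR : G ⊆ RT T r) {a b : Fin n}
    (h : (toSG G).Adj a b) : (toSG T).dist r b ≤ (toSG T).dist r a + 1 := by
  rcases (toSG_adj.1 h).2 with hm | hm
  · exact (RT_layers hTe hTc hTcard (hGR hm)).1
  · exact (RT_layers hTe hTc hTcard (hGR hm)).2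

lemma G_dist_eq {T G : Finset (Fin n × Fin n)} {r : Fin n}
    (hTe : T ⊆ edgesOn n Finset.univ) (hTc : (toSG T).Connected)
    (hTcard : T.card = n - 1) (hTG : T ⊆ G) (hGR : G ⊆ RT T r)
    (hGc : (toSG G).Connected) (v : Fin n) :
    (toSG G).dist r v = (toSG T).dist r v := by
  refine le_antisymm (dist_le_dist_subgraph hTG (hTc.preconnected r v)) ?_
  obtain ⟨p, hp⟩ := hGc.exists_walk_length_eq_dist r v
  have key : ∀ (a b : Fin n) (w : (toSG G).Walk a b),
      (toSG T).dist r b ≤ (toSG T).dist r a + w.length := by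
    intro a b w
    induction w with
    | nil => simp
    | @cons a c b h q ih =>
      have := step_T hTe hTc hTcard hGR h
      rw [SimpleGraph.Walk.length_cons]
      omega
  have := key r v p
  rw [hp, SimpleGraph.dist_self] at this
  omega

lemma G_par_eq {T G : Finset (Fin n × Fin n)} {r : Fin n}
    (hTe : T ⊆ edgesOn n Finset.univ) (hTc : (toSG T).Connected)
    (hTcard : T.card = n - 1) (hTG : T ⊆ G) (hGR : G ⊆ RT T r)
    (hGc : (toSG G).Connected) {v : Fin n} (hv : v ≠ r) :
    par G r v = par T r v := by
  have hdeq : ∀ u, (toSG G).dist r u = (toSG T).dist r u :=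
    G_dist_eq hTe hTc hTcard hTG hGR hGc
  have hmem : par T r v ∈ cand G r v := by
    rw [mem_cand]
    exact ⟨toSG_mono hTG (par_adj hTc hv), by rw [hdeq, hdeq]; exact par_dist hTc hv⟩
  have hmin : ∀ u ∈ cand G r v, par T r v ≤ u := by
    intro u hu
    obtain ⟨hadj, hdist⟩ := mem_cand.1 hu
    rw [hdeq, hdeq] at hdist
    rcases (toSG_adj.1 hadj).2 with hm | hm
    · have hR := (mem_RT.1 (hGR hm)).2
      dsimp only at hR
      rcases hR with hT | hsame | ⟨hd, hpar⟩ | ⟨hd, hpar⟩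
      · obtain ⟨w, hw, hop⟩ := mem_PT.1 ((PT_self hTe hTc hTcard (r := r)).symm ▸ hT)
        rcases op_cases hop.symm with ⟨h1, h2⟩ | ⟨h1, h2⟩
        · subst h2; exact le_of_eq h1
        · subst h2
          have hdw := par_dist hTc hw
          rw [h1] at hdw
          omega
      · omega
      · exact hpar.le
      · omega
    · have hR := (mem_RT.1 (hGR hm)).2
      dsimp only at hR
      rcases hR with hT | hsame | ⟨hd, hpar⟩ | ⟨hd, hpar⟩
      · obtain ⟨w, hw, hop⟩ := mem_PT.1 ((PT_self hTe hTc hTcard (r := r)).symm ▸ hT)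
        rcases op_cases hop.symm with ⟨h1, h2⟩ | ⟨h1, h2⟩
        · subst h2
          have hdw := par_dist hTc hw
          rw [h1] at hdw
          omega
        · subst h2; exact le_of_eq h1
      · omega
      · omega
      · exact hpar.le
  have hne : (cand G r v).Nonempty := ⟨_, hmem⟩
  rw [par, dif_pos hne]
  exact le_antisymm (Finset.min'_le _ _ hmem) (hmin _ (Finset.min'_mem _ hne))

lemma PT_G_eq {T G : Finset (Fin n × Fin n)} {r : Fin n}
    (hTe : T ⊆ edgesOn n Finset.univ) (hTc : (toSG T).Connected)
    (hTcard : T.card = n - 1) (hTG : T ⊆ G) (hGR : G ⊆ RT T r)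
    (hGc : (toSG G).Connected) : PT G r = T := by
  have himg : PT G r = PT T r := by
    unfold PT
    apply Finset.image_congr
    intro v hv
    show op (par G r v) v = op (par T r v) v
    rw [G_par_eq hTe hTc hTcard hTG hGR hGc (Finset.ne_of_mem_erase hv)]
  rw [himg, PT_self hTe hTc hTcard]

lemma mem_connGraphsOn {G : Finset (Fin n × Fin n)} :
    G ∈ connGraphsOn n Finset.univ ↔
      G ⊆ edgesOn n Finset.univ ∧ ConnOn Finset.univ G := by
  simp [connGraphsOn, graphsOn, Finset.mem_filter, Finset.mem_powerset]

lemma mem_treesOn {T : Finset (Fin n × Fin n)} :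
    T ∈ treesOn n ↔ (T ⊆ edgesOn n Finset.univ ∧ ConnOn Finset.univ T) ∧ T.card = n - 1 := by
  rw [treesOn, Finset.mem_filter, mem_connGraphsOn]

lemma PT_mem_treesOn (hn : 1 ≤ n) {G : Finset (Fin n × Fin n)}
    (hG : G ∈ connGraphsOn n Finset.univ) (r : Fin n) : PT G r ∈ treesOn n := by
  obtain ⟨hGe, hGco⟩ := mem_connGraphsOn.1 hG
  have hGc := (connOn_iff hn hGe).1 hGco
  have hPe : PT G r ⊆ edgesOn n Finset.univ := (PT_subset hGe hGc).trans hGe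
  exact mem_treesOn.2 ⟨⟨hPe, (connOn_iff hn hPe).2 (PT_connected hn hGc)⟩, PT_card hGc⟩

lemma fiber_eq (hn : 1 ≤ n) {r : Fin n} {T : Finset (Fin n × Fin n)} (hT : T ∈ treesOn n) :
    (connGraphsOn n Finset.univ).filter (fun G => PT G r = T) =
      ((RT T r \ T).powerset).image (fun S => T ∪ S) := by
  obtain ⟨⟨hTe, hTconn⟩, hTcard⟩ := mem_treesOn.1 hT
  have hTc : (toSG T).Connected := (connOn_iff hn hTe).1 hTconn
  ext G
  simp only [Finset.mem_filter, Finset.mem_image, Finset.mem_powerset]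
  constructor
  · rintro ⟨hGconn, hPT⟩
    obtain ⟨hGe, hGco⟩ := mem_connGraphsOn.1 hGconn
    have hGc := (connOn_iff hn hGe).1 hGco
    have hsub : T ⊆ G := hPT ▸ PT_subset hGe hGc
    have hsup : G ⊆ RT T r := hPT ▸ subset_RT_PT hGe hGc
    exact ⟨G \ T, Finset.sdiff_subset_sdiff hsup (le_refl T),
      Finset.union_sdiff_of_subset hsub⟩
  · rintro ⟨S, hS, rfl⟩
    have hTG : T ⊆ T ∪ S := Finset.subset_union_left
    have hGR : T ∪ S ⊆ RT T r :=
      Finset.union_subset (T_subset_RT hTe) (hS.trans Finset.sdiff_subset)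
    have hGe : T ∪ S ⊆ edgesOn n Finset.univ := hGR.trans RT_subset_edges
    have hGco : ConnOn Finset.univ (T ∪ S) := by
      refine ⟨hTconn.1, fun i hi j hj => Relation.ReflTransGen.mono ?_ _ _ (hTconn.2 i hi j hj)⟩
      intro a b hab
      exact hab.imp (fun h => Finset.mem_union_left _ h) (fun h => Finset.mem_union_left _ h)
    have hGc := (connOn_iff hn hGe).1 hGco
    exact ⟨mem_connGraphsOn.2 ⟨hGe, hGco⟩, PT_G_eq hTe hTc hTcard hTG hGR hGc⟩

lemma penrose_sum (hn : 1 ≤ n) (r : Fin n) (w : Fin n × Fin n → ℂ) :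
    ∑ G ∈ connGraphsOn n Finset.univ, ∏ p ∈ G, w p =
      ∑ T ∈ treesOn n, (∏ p ∈ T, w p) * ∏ p ∈ RT T r \ T, (1 + w p) := by
  classical
  rw [← Finset.sum_fiberwise_of_maps_to (g := fun G => PT G r)
    (fun G hG => PT_mem_treesOn hn hG r) (fun G => ∏ p ∈ G, w p)]
  refine Finset.sum_congr rfl fun T hT => ?_
  rw [fiber_eq hn hT]
  have hdisj : ∀ S ∈ (RT T r \ T).powerset, Disjoint T S := by
    intro S hS
    exact Finset.disjoint_of_subset_right (Finset.mem_powerset.1 hS) Finset.sdiff_disjoint.symm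
  rw [Finset.sum_image (fun S1 h1 S2 h2 h => by
    rw [← Finset.union_sdiff_cancel_left (hdisj S1 h1), h,
      Finset.union_sdiff_cancel_left (hdisj S2 h2)])]
  calc ∑ S ∈ (RT T r \ T).powerset, ∏ p ∈ T ∪ S, w p
      = ∑ S ∈ (RT T r \ T).powerset, (∏ p ∈ T, w p) * ∏ p ∈ S, w p := by
        refine Finset.sum_congr rfl fun S hS => ?_
        rw [Finset.prod_union (hdisj S hS)]
    _ = (∏ p ∈ T, w p) * ∑ S ∈ (RT T r \ T).powerset, ∏ p ∈ S, w p := by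
        rw [Finset.mul_sum]
    _ = (∏ p ∈ T, w p) * ∏ p ∈ RT T r \ T, (1 + w p) := by
        congr 1
        rw [show (∏ p ∈ RT T r \ T, (1 + w p)) = ∏ p ∈ RT T r \ T, (w p + 1) by
          exact Finset.prod_congr rfl fun p _ => add_comm _ _]
        rw [Finset.prod_add]
        exact (Finset.sum_congr rfl fun S hS => by rw [Finset.prod_const_one, mul_one]).symm

open MeasureTheory in
/-- The interpolation measure attached to the tree `T`: Lebesgue on edges of `T`,
`δ₁` on `RT T r \ T`, `δ₀` elsewhere, realized as a pushforward of the uniform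
measure on the cube. -/
noncomputable def lamT (T : Finset (Fin n × Fin n)) (r : Fin n) :
    Measure ((Fin n × Fin n) → ℝ) :=
  Measure.map (fun (x : (Fin n × Fin n) → unitInterval) p =>
      if p ∈ T then (x p : ℝ) else if p ∈ RT T r \ T then 1 else 0)
    (volume : Measure ((Fin n × Fin n) → unitInterval))

lemma measurable_phi (T : Finset (Fin n × Fin n)) (r : Fin n) :
    Measurable (fun (x : (Fin n × Fin n) → unitInterval) p =>
      if p ∈ T then (x p : ℝ) else if p ∈ RT T r \ T then 1 else 0) := by
  refine measurable_pi_lambda _ fun p => ?_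
  by_cases h1 : p ∈ T
  · simp only [h1, if_true]
    exact continuous_subtype_val.measurable.comp (measurable_pi_apply p)
  · simp only [h1, if_false]
    exact measurable_const

open MeasureTheory in
lemma lamT_prob (T : Finset (Fin n × Fin n)) (r : Fin n) :
    IsProbabilityMeasure (lamT T r) :=
  Measure.isProbabilityMeasure_map (measurable_phi T r).aemeasurable

open MeasureTheory in
lemma lamT_ae (T : Finset (Fin n × Fin n)) (r : Fin n) :
    ∀ᵐ s ∂(lamT T r), ∀ p, s p ∈ Set.Icc (0 : ℝ) 1 := by
  rw [lamT]
  have hm : MeasurableSet {s : (Fin n × Fin n) → ℝ | ∀ p, s p ∈ Set.Icc (0 : ℝ) 1} := by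
    rw [Set.setOf_forall]
    exact MeasurableSet.iInter fun p => (measurable_pi_apply p) measurableSet_Icc
  rw [MeasureTheory.ae_map_iff (measurable_phi T r).aemeasurable hm]
  refine MeasureTheory.ae_of_all _ fun x => ?_
  intro p
  by_cases h1 : p ∈ T
  · simp only [Set.mem_setOf_eq, h1, if_true]
    exact (x p).2
  · simp only [Set.mem_setOf_eq, h1, if_false]
    split <;> norm_num

open MeasureTheory in
lemma key_integral (w : ℂ) :
    (-w) * ∫ x : unitInterval, Complex.exp (-(((x : ℝ) : ℂ) * w)) = Complex.exp (-w) - 1 := by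
  have h1 : (∫ x : unitInterval, Complex.exp (-(((x : ℝ) : ℂ) * w)))
      = ∫ x in Set.Icc (0 : ℝ) 1, Complex.exp (-((x : ℂ) * w)) := by
    exact integral_subtype_comap (α := ℝ) (μ := volume) (s := Set.Icc (0 : ℝ) 1)
      measurableSet_Icc fun x => Complex.exp (-((x : ℂ) * w))
  rcases eq_or_ne w 0 with rfl | hw
  · simp
  · rw [h1, MeasureTheory.integral_Icc_eq_integral_Ioc,
      ← intervalIntegral.integral_of_le (zero_le_one (α := ℝ))]
    simp_rw [show ∀ x : ℝ, -((x : ℂ) * w) = (-w) * (x : ℂ) from fun x => by ring]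
    rw [integral_exp_mul_complex (neg_ne_zero.2 hw)]
    rw [mul_comm, div_mul_cancel₀ _ (neg_ne_zero.2 hw)]
    simp [Complex.exp_zero]

open MeasureTheory in
lemma lamT_integral (hn : 1 ≤ n) {T : Finset (Fin n × Fin n)} (hT : T ∈ treesOn n)
    (r : Fin n) (v : Fin n → Fin n → ℂ) :
    (∏ p ∈ T, (-(v p.1 p.2))) *
      ∫ s, Complex.exp (-(∑ p ∈ edgesOn n Finset.univ, (s p : ℂ) * v p.1 p.2)) ∂(lamT T r)
    = (∏ p ∈ T, (Complex.exp (-(v p.1 p.2)) - 1)) *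
        ∏ p ∈ RT T r \ T, Complex.exp (-(v p.1 p.2)) := by
  obtain ⟨⟨hTe, _⟩, _⟩ := mem_treesOn.1 hT
  have hcont : Continuous fun s : (Fin n × Fin n) → ℝ =>
      Complex.exp (-(∑ p ∈ edgesOn n Finset.univ, (s p : ℂ) * v p.1 p.2)) :=
    Complex.continuous_exp.comp (Continuous.neg (continuous_finset_sum _ fun p _ =>
      (Complex.continuous_ofReal.comp (continuous_apply p)).mul continuous_const))
  rw [lamT, integral_map (measurable_phi T r).aemeasurable hcont.aestronglyMeasurable]
  -- rewrite the integrand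
  have hTRT : T ⊆ RT T r := T_subset_RT hTe
  have hRTe : RT T r ⊆ edgesOn n Finset.univ := RT_subset_edges
  have hsplit : ∀ x : (Fin n × Fin n) → unitInterval,
      (∑ p ∈ edgesOn n Finset.univ,
        ((if p ∈ T then ((x p : ℝ)) else if p ∈ RT T r \ T then 1 else 0 : ℝ) : ℂ) * v p.1 p.2)
      = (∑ p ∈ T, ((x p : ℝ) : ℂ) * v p.1 p.2) + ∑ p ∈ RT T r \ T, v p.1 p.2 := by
    intro x
    have e1 : (∑ p ∈ T,
        ((if p ∈ T then ((x p : ℝ)) else if p ∈ RT T r \ T then 1 else 0 : ℝ) : ℂ) * v p.1 p.2)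
        = ∑ p ∈ T, ((x p : ℝ) : ℂ) * v p.1 p.2 :=
      Finset.sum_congr rfl fun p hp => by simp [hp]
    have e2 : (∑ p ∈ edgesOn n Finset.univ \ T,
        ((if p ∈ T then ((x p : ℝ)) else if p ∈ RT T r \ T then 1 else 0 : ℝ) : ℂ) * v p.1 p.2)
        = ∑ p ∈ RT T r \ T, v p.1 p.2 := by
      have hv : ∀ p ∈ edgesOn n Finset.univ \ T, p ∉ RT T r \ T →
          ((if p ∈ T then ((x p : ℝ)) else if p ∈ RT T r \ T then 1 else 0 : ℝ) : ℂ)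
            * v p.1 p.2 = 0 := by
        intro p hp hp2
        have hq : p ∉ T := (Finset.mem_sdiff.1 hp).2
        simp [hq, hp2]
      rw [← Finset.sum_subset (Finset.sdiff_subset_sdiff hRTe (le_refl T)) hv]
      refine Finset.sum_congr rfl fun p hp => ?_
      have hq : p ∉ T := (Finset.mem_sdiff.1 hp).2
      simp [hq, hp]
    rw [← Finset.sum_sdiff (hTRT.trans hRTe), e1, e2]
    exact add_comm _ _
  simp_rw [hsplit]
  simp_rw [neg_add, Complex.exp_add]
  rw [integral_mul_const]
  -- product structure of the first factor
  have hprod : ∀ x : (Fin n × Fin n) → unitInterval,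
      Complex.exp (-∑ p ∈ T, ((x p : ℝ) : ℂ) * v p.1 p.2)
      = ∏ p : Fin n × Fin n,
          (if p ∈ T then Complex.exp (-(((x p : ℝ) : ℂ) * v p.1 p.2)) else 1) := by
    intro x
    rw [← Finset.sum_neg_distrib, Complex.exp_sum]
    rw [Finset.prod_congr rfl
      (fun p hp => ((if_pos hp).symm :
        Complex.exp (-(((x p : ℝ) : ℂ) * v p.1 p.2)) = _))]
    exact Finset.prod_subset (Finset.subset_univ T) (fun p _ hp => if_neg hp)
  simp_rw [hprod]
  have hfub := MeasureTheory.integral_fintype_prod_eq_prod (𝕜 := ℂ) (ι := Fin n × Fin n)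
    (E := fun _ => unitInterval) (μ := fun _ => volume)
    (fun p (t : unitInterval) => (if p ∈ T then Complex.exp (-(((t : ℝ) : ℂ) * v p.1 p.2)) else 1))
  rw [← MeasureTheory.volume_pi] at hfub
  rw [hfub]
  -- evaluate the product of integrals
  have hI : ∀ p : Fin n × Fin n,
      (∫ t : unitInterval, (if p ∈ T then Complex.exp (-(((t : ℝ) : ℂ) * v p.1 p.2)) else 1))
      = if p ∈ T then ∫ t : unitInterval, Complex.exp (-(((t : ℝ) : ℂ) * v p.1 p.2)) else 1 := by
    intro p
    by_cases hp : p ∈ T <;> simp [hp]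
  simp_rw [hI]
  have hone : (∏ p : Fin n × Fin n,
        (if p ∈ T then ∫ t : unitInterval, Complex.exp (-(((t : ℝ) : ℂ) * v p.1 p.2)) else 1))
      = ∏ p ∈ T, ∫ t : unitInterval, Complex.exp (-(((t : ℝ) : ℂ) * v p.1 p.2)) := by
    rw [← Finset.prod_subset (Finset.subset_univ T) (fun p _ hp => if_neg hp)]
    exact Finset.prod_congr rfl fun p hp => if_pos hp
  rw [hone, ← Finset.sum_neg_distrib, Complex.exp_sum, ← mul_assoc, ← Finset.prod_mul_distrib]
  congr 1
  exact Finset.prod_congr rfl fun p hp => key_integral (v p.1 p.2)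

end BBFAux

/-- the Brydges–Battle–Federbush tree identity.  There exists a
family of probability measures `λ_T` on `[0,1]^{pairs}`, indexed by trees `T`
on `{1,…,n}`, such that for every symmetric family of complex couplings `v`:
`Σ_{G∈𝒞_n} ∏_{{i,j}∈G} (e^{-v_{ij}} - 1)
  = Σ_{T∈𝒯_n} ∏_{{i,j}∈T} (-v_{ij}) ∫ dλ_T({s}) e^{-Σ_{i<j} s_{ij} v_{ij}}`. -/
theorem BBF_tree_identity (n : ℕ) (hn : 1 ≤ n) :
    ∃ lam : Finset (Fin n × Fin n) → Measure ((Fin n × Fin n) → ℝ),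
      (∀ T ∈ treesOn n, IsProbabilityMeasure (lam T) ∧
        ∀ᵐ s ∂(lam T), ∀ p, s p ∈ Set.Icc (0 : ℝ) 1) ∧
      ∀ v : Fin n → Fin n → ℂ, (∀ i j, v i j = v j i) →
        ∑ G ∈ connGraphsOn n Finset.univ,
            ∏ p ∈ G, (Complex.exp (-(v p.1 p.2)) - 1) =
          ∑ T ∈ treesOn n, (∏ p ∈ T, (-(v p.1 p.2))) *
            ∫ s, Complex.exp
                (-(∑ p ∈ edgesOn n Finset.univ, (s p : ℂ) * v p.1 p.2))
              ∂(lam T) := by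
  classical
  refine ⟨fun T => BBFAux.lamT T ⟨0, hn⟩,
    fun T hT => ⟨BBFAux.lamT_prob T ⟨0, hn⟩, BBFAux.lamT_ae T ⟨0, hn⟩⟩, ?_⟩
  intro v hv
  rw [BBFAux.penrose_sum hn ⟨0, hn⟩ (fun p => Complex.exp (-(v p.1 p.2)) - 1)]
  refine Finset.sum_congr rfl fun T hT => ?_
  rw [BBFAux.lamT_integral hn hT ⟨0, hn⟩ v]
  congr 1
  exact Finset.prod_congr rfl fun p _ => by ring
end
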